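/- arXiv:2503.11734 — 3 statements merged into one kernel-verified Lean document; each statement's English description precedes it below -/
import Mathlib

section
/- Let n ≥ 1 and let q = P_{2n} (an even Pell number). Then a(q/2 + j) = q + a(j) and b(q/2 + j) = q + b(j) for all integers j with 1 ≤ j ≤ q/2. -/
/-- `a n` is the `n`-th positive integer `k` (1-indexed, in increasing order) such that
the fractional part `{k·√2}` is less than `1/2`. -/
noncomputable def a (n : ℕ) : ℕ :=
  Nat.nth (fun k => 0 < k ∧ Int.fract ((k : ℝ) * Real.sqrt 2) < 1 / 2) (n - 1)

/-- `b n` is the `n`-th positive integer `k` (1-indexed, in increasing order) such that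
the fractional part `{k·√2}` is at least `1/2`. -/
noncomputable def b (n : ℕ) : ℕ :=
  Nat.nth (fun k => 0 < k ∧ 1 / 2 ≤ Int.fract ((k : ℝ) * Real.sqrt 2)) (n - 1)

/-- The Pell numbers: `P 0 = 0`, `P 1 = 1`, `P (n+2) = 2·P (n+1) + P n`. -/
def pell : ℕ → ℕ
  | 0 => 0
  | 1 => 1
  | n + 2 => 2 * pell (n + 1) + pell n

namespace Aux

def comp : ℕ → ℕ
  | 0 => 1
  | 1 => 1
  | n + 2 => 2 * comp (n + 1) + comp n

lemma step (m : ℕ) : comp (m+1) = comp m + 2 * pell m ∧ pell (m+1) = comp m + pell m := by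
  induction m with
  | zero => simp [comp, pell]
  | succ m ih =>
    obtain ⟨h1, h2⟩ := ih
    have e1 : comp (m+1+1) = 2 * comp (m+1) + comp m := rfl
    have e2 : pell (m+1+1) = 2 * pell (m+1) + pell m := rfl
    omega

lemma comp_sq (m : ℕ) : (comp m : ℤ)^2 = 2 * (pell m : ℤ)^2 + (-1)^m := by
  induction m with
  | zero => simp [comp, pell]
  | succ m ih =>
    obtain ⟨h1, h2⟩ := step m
    rw [h1, h2, pow_succ]
    push_cast
    linear_combination (-1 : ℤ) * ih

lemma comp_odd (m : ℕ) : Odd (comp m) := by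
  induction m with
  | zero => simp [comp]
  | succ m ih =>
    rw [(step m).1]
    rcases ih with ⟨c, hc⟩
    exact ⟨c + pell m, by omega⟩

lemma pell_even (n : ℕ) : Even (pell (2*n)) := by
  induction n with
  | zero => simp [pell]
  | succ n ih =>
    have e : 2*(n+1) = (2*n) + 2 := by ring
    rw [e]
    have e2 : pell (2*n+2) = 2 * pell (2*n+1) + pell (2*n) := rfl
    rcases ih with ⟨c, hc⟩
    exact ⟨pell (2*n+1) + c, by omega⟩

lemma le_pell (m : ℕ) : m ≤ pell m := by
  induction m with
  | zero => simp
  | succ m ih =>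
    have h1 := (step m).2
    have h2 := comp_odd m
    have : 1 ≤ comp m := h2.pos
    omega

lemma comp_sq_even (n : ℕ) : (comp (2*n) : ℤ)^2 = 2 * (pell (2*n) : ℤ)^2 + 1 := by
  have := comp_sq (2*n)
  rw [pow_mul] at this
  simpa using this

end Aux

structure Setup where
  q : ℕ
  H : ℕ
  hq2 : 2 ≤ q
  hqe : Even q
  hsq : (H : ℤ)^2 = 2 * (q : ℤ)^2 + 1
  hodd : Odd H

namespace Setup

noncomputable def δ (S : Setup) : ℝ := (S.H : ℝ) - (S.q : ℝ) * Real.sqrt 2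
noncomputable def α (S : Setup) : ℝ := (S.H : ℝ) + (S.q : ℝ) * Real.sqrt 2

variable (S : Setup)

lemma s2_sq : Real.sqrt 2 ^ 2 = 2 := Real.sq_sqrt (by norm_num)

lemma s2_gt : (1.4 : ℝ) < Real.sqrt 2 := by
  nlinarith [s2_sq, Real.sqrt_nonneg 2]

lemma s2_lt : Real.sqrt 2 < 1.5 := by
  nlinarith [s2_sq, Real.sqrt_nonneg 2]

lemma hsqR : (S.H : ℝ)^2 = 2 * (S.q : ℝ)^2 + 1 := by exact_mod_cast S.hsq

lemma hqR : (2 : ℝ) ≤ (S.q : ℝ) := by exact_mod_cast S.hq2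

lemma H_ge : 3 ≤ S.H := by
  have hq := S.hq2
  have hs := S.hsq
  by_contra h
  push_neg at h
  have hqz : (2 : ℤ) ≤ (S.q : ℤ) := by exact_mod_cast hq
  have hHz : (S.H : ℤ) < 3 := by exact_mod_cast h
  have hH0 : (0 : ℤ) ≤ (S.H : ℤ) := by positivity
  nlinarith

lemma delta_mul_alpha : S.δ * S.α = 1 := by
  have h2 := s2_sq
  have hc := S.hsqR
  unfold δ α
  linear_combination hc - (S.q : ℝ)^2 * h2

lemma alpha_ge : (4 : ℝ) ≤ S.α := by
  have h1 : (3 : ℝ) ≤ (S.H : ℝ) := by exact_mod_cast S.H_ge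
  have h2 := S.hqR
  have h3 := s2_gt
  unfold α
  nlinarith

lemma alpha_pos : (0 : ℝ) < S.α := lt_of_lt_of_le (by norm_num) S.alpha_ge

lemma delta_pos : (0 : ℝ) < S.δ := by
  have h1 := S.delta_mul_alpha
  have h2 := S.alpha_pos
  nlinarith

lemma delta_le : S.δ ≤ 1/4 := by
  have h1 := S.delta_mul_alpha
  have h2 := S.alpha_ge
  have h3 := S.delta_pos
  nlinarith

lemma H_gt : (S.q : ℝ) * Real.sqrt 2 < (S.H : ℝ) := by
  have := S.delta_pos
  unfold δ at this
  linarith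

lemma key_bound : 2 * (S.q : ℝ) * Real.sqrt 2 * S.δ < 1 := by
  have h1 := S.delta_mul_alpha
  have h2 := S.delta_pos
  have h3 : 2 * (S.q : ℝ) * Real.sqrt 2 = S.α - S.δ := by unfold α δ; ring
  nlinarith


lemma kpos_cast (k : ℕ) (hk : 1 ≤ k) : (1 : ℝ) ≤ (k : ℝ) := by exact_mod_cast hk

/-- K1: for `1 ≤ k < q`, `k√2` is at distance more than `δ` from any integer. -/
lemma K1 (k : ℕ) (hk1 : 1 ≤ k) (hkq : k < S.q) (c : ℤ) :
    S.δ < |(k : ℝ) * Real.sqrt 2 - (c : ℝ)| := by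
  by_contra h
  push_neg at h
  have h2 : Real.sqrt 2 ^ 2 = 2 := s2_sq
  have hsg : (1.4 : ℝ) < Real.sqrt 2 := s2_gt
  have hd0 := S.delta_pos
  have hd4 := S.delta_le
  have hkb := kpos_cast k hk1
  have habs := abs_le.mp h
  obtain ⟨x, hxdef⟩ : ∃ x : ℝ, x = (k : ℝ) * Real.sqrt 2 := ⟨_, rfl⟩
  rw [← hxdef] at habs
  have hx1 : (1.4 : ℝ) ≤ x := by
    rw [hxdef]
    nlinarith
  have hc1 : (1 : ℝ) ≤ (c : ℝ) := by
    have h0 : (0 : ℝ) < (c : ℝ) := by linarith [habs.1, habs.2]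
    have h0' : (0 : ℤ) < c := by exact_mod_cast h0
    exact_mod_cast h0'
  have hkq' : (k : ℝ) ≤ (S.q : ℝ) - 1 := by
    have : (k : ℝ) + 1 ≤ (S.q : ℝ) := by exact_mod_cast hkq
    linarith
  obtain ⟨v, hvdef⟩ : ∃ v : ℤ, v = 2 * (k : ℤ)^2 - c^2 := ⟨_, rfl⟩
  have hvR : (v : ℝ) = (x - c) * (x + c) := by
    rw [hvdef, hxdef]
    push_cast
    linear_combination (-(k : ℝ)^2) * h2
  have hxc : (0 : ℝ) < x + c := by linarith
  have hb1 : |(v : ℝ)| ≤ S.δ * (x + c) := by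
    rw [hvR, abs_mul, abs_of_pos hxc]
    exact mul_le_mul_of_nonneg_right (abs_le.mpr habs) (le_of_lt hxc)
  have hkey := S.key_bound
  have hb2 : S.δ * (x + c) < 1 := by
    have hcx : (c : ℝ) ≤ x + S.δ := by linarith [habs.1]
    have hxq : x ≤ ((S.q : ℝ) - 1) * Real.sqrt 2 := by
      rw [hxdef]
      nlinarith
    nlinarith
  have hvlt : |(v : ℝ)| < 1 := lt_of_le_of_lt hb1 hb2
  have hvne : v ≠ 0 := by
    intro h0
    rw [h0] at hvR
    push_cast at hvR
    have hx : x = (c : ℝ) := by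
      rcases mul_eq_zero.mp hvR.symm with h' | h'
      · linarith
      · linarith
    have hirr : Irrational ((k : ℕ) * Real.sqrt 2) :=
      irrational_sqrt_two.natCast_mul (by omega)
    exact hirr.ne_int c (by rw [← hxdef]; exact_mod_cast hx)
  have hge : (1 : ℝ) ≤ |(v : ℝ)| := by
    have h' := Int.one_le_abs hvne
    calc (1:ℝ) ≤ ((|v| : ℤ) : ℝ) := by exact_mod_cast h'
    _ = |(v : ℝ)| := by push_cast; rfl
  linarith

/-- K2: for `1 ≤ k ≤ q` and odd `t`, `2k√2 - t` cannot lie in `[0, 2δ)`. -/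
lemma K2 (k : ℕ) (hk1 : 1 ≤ k) (hkq : k ≤ S.q) (t : ℤ) (hto : Odd t)
    (h0 : 0 ≤ 2 * (k : ℝ) * Real.sqrt 2 - (t : ℝ))
    (h1 : 2 * (k : ℝ) * Real.sqrt 2 - (t : ℝ) < 2 * S.δ) : False := by
  have h2 : Real.sqrt 2 ^ 2 = 2 := s2_sq
  have hsg : (1.4 : ℝ) < Real.sqrt 2 := s2_gt
  have hd0 := S.delta_pos
  have hd4 := S.delta_le
  have hkb := kpos_cast k hk1
  have hkq' : (k : ℝ) ≤ (S.q : ℝ) := by exact_mod_cast hkq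
  have hkey := S.key_bound
  obtain ⟨v, hvdef⟩ : ∃ v : ℤ, v = 8 * (k : ℤ)^2 - t^2 := ⟨_, rfl⟩
  have hvR : (v : ℝ) = (2 * k * Real.sqrt 2 - t) * (2 * k * Real.sqrt 2 + t) := by
    rw [hvdef]
    push_cast
    linear_combination (-4 * (k : ℝ)^2) * h2
  have htpos : (0 : ℝ) < 2 * k * Real.sqrt 2 + (t : ℝ) := by nlinarith
  have hv0 : (0 : ℝ) ≤ (v : ℝ) := by rw [hvR]; exact mul_nonneg h0 (le_of_lt htpos)
  have hvlt : (v : ℝ) < 7 := by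
    rw [hvR]
    have hb : 2 * (k:ℝ) * Real.sqrt 2 + (t:ℝ) ≤ 4 * (k:ℝ) * Real.sqrt 2 := by linarith
    have hb2 : 4 * (k:ℝ) * Real.sqrt 2 ≤ 4 * (S.q:ℝ) * Real.sqrt 2 := by nlinarith
    nlinarith
  obtain ⟨l, hl⟩ := hto
  obtain ⟨e, he⟩ := Int.even_mul_succ_self l
  have ht2 : t^2 = 8 * e + 1 := by rw [hl]; linear_combination 4 * he
  have hvz0 : (0 : ℤ) ≤ v := by exact_mod_cast hv0
  have hvz7 : (v : ℤ) < 7 := by exact_mod_cast hvlt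
  have hveq : v = 8 * (k:ℤ)^2 - (8 * e + 1) := by rw [hvdef, ht2]
  obtain ⟨K, hK⟩ : ∃ K : ℤ, (k:ℤ)^2 = K := ⟨_, rfl⟩
  rw [hK] at hveq
  omega

set_option maxHeartbeats 1000000 in
/-- K3: for `1 ≤ k < q`, `2k ≠ q`, odd `t`, `t - 2k√2` cannot lie in `(0, 2δ)`. -/
lemma K3 (k : ℕ) (hk1 : 1 ≤ k) (hkq : k < S.q) (hne : 2 * k ≠ S.q) (t : ℤ) (hto : Odd t)
    (h0 : 0 < (t : ℝ) - 2 * (k : ℝ) * Real.sqrt 2)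
    (h1 : (t : ℝ) - 2 * (k : ℝ) * Real.sqrt 2 < 2 * S.δ) : False := by
  have h2 : Real.sqrt 2 ^ 2 = 2 := s2_sq
  have hsg : (1.4 : ℝ) < Real.sqrt 2 := s2_gt
  have hsl : Real.sqrt 2 < 1.5 := s2_lt
  have hd0 := S.delta_pos
  have hd4 := S.delta_le
  have hkb := kpos_cast k hk1
  have hkq' : (k : ℝ) ≤ (S.q : ℝ) := by
    have h' : (k:ℝ) < (S.q:ℝ) := by exact_mod_cast hkq
    linarith
  have hkey := S.key_bound
  have hqR := S.hqR
  obtain ⟨v, hvdef⟩ : ∃ v : ℤ, v = t^2 - 8 * (k : ℤ)^2 := ⟨_, rfl⟩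
  have hvR : (v : ℝ) = ((t:ℝ) - 2 * k * Real.sqrt 2) * ((t:ℝ) + 2 * k * Real.sqrt 2) := by
    rw [hvdef]
    push_cast
    linear_combination (4 * (k : ℝ)^2) * h2
  have htpos : (0 : ℝ) < (t:ℝ) + 2 * k * Real.sqrt 2 := by nlinarith
  have hv0 : (0 : ℝ) < (v : ℝ) := by rw [hvR]; exact mul_pos h0 htpos
  have hvlt : (v : ℝ) < 5 := by
    rw [hvR]
    have hb : (t:ℝ) + 2 * k * Real.sqrt 2 ≤ 4 * (k:ℝ) * Real.sqrt 2 + 2 * S.δ := by linarith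
    have hb2 : 4 * (k:ℝ) * Real.sqrt 2 ≤ 4 * (S.q:ℝ) * Real.sqrt 2 := by nlinarith
    nlinarith
  obtain ⟨l, hl⟩ := hto
  obtain ⟨e, he⟩ := Int.even_mul_succ_self l
  have ht2 : t^2 = 8 * e + 1 := by rw [hl]; linear_combination 4 * he
  have hvz0 : (0 : ℤ) < v := by exact_mod_cast hv0
  have hvz5 : (v : ℤ) < 5 := by exact_mod_cast hvlt
  have hv1 : v = 1 := by
    have hveq : v = (8 * e + 1) - 8 * (k:ℤ)^2 := by rw [hvdef, ht2]
    obtain ⟨K, hK⟩ : ∃ K : ℤ, (k:ℤ)^2 = K := ⟨_, rfl⟩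
    rw [hK] at hveq
    omega
  -- the Pell uniqueness argument
  have hm : t^2 - 2 * (2 * (k:ℤ))^2 = 1 := by
    have : v = 1 := hv1
    rw [hvdef] at this
    linarith [this]
  have hH1 : (S.H : ℤ)^2 - 2 * (S.q : ℤ)^2 = 1 := by linarith [S.hsq]
  have hH1R : (S.H : ℝ)^2 - 2 * (S.q : ℝ)^2 = 1 := by exact_mod_cast hH1
  have hmR : (t : ℝ)^2 - 2 * (2 * (k:ℝ))^2 = 1 := by exact_mod_cast hm
  obtain ⟨u0, hu0def⟩ : ∃ u0 : ℤ, u0 = t * S.H - 2 * (2 * (k:ℤ)) * S.q := ⟨_, rfl⟩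
  obtain ⟨v0, hv0def⟩ : ∃ v0 : ℤ, v0 = (2 * (k:ℤ)) * S.H - t * S.q := ⟨_, rfl⟩
  have huv : u0^2 - 2 * v0^2 = 1 := by
    have expand : u0^2 - 2 * v0^2 = (t^2 - 2*(2*(k:ℤ))^2) * ((S.H:ℤ)^2 - 2*(S.q:ℤ)^2) := by
      rw [hu0def, hv0def]; ring
    rw [expand, hm, hH1]; norm_num
  have huvR : (u0 : ℝ)^2 - 2 * (v0 : ℝ)^2 = 1 := by exact_mod_cast huv
  obtain ⟨X, hXdef⟩ : ∃ X : ℝ, X = (u0 : ℝ) + (v0 : ℝ) * Real.sqrt 2 := ⟨_, rfl⟩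
  obtain ⟨Y, hYdef⟩ : ∃ Y : ℝ, Y = (u0 : ℝ) - (v0 : ℝ) * Real.sqrt 2 := ⟨_, rfl⟩
  obtain ⟨β, hβdef⟩ : ∃ β : ℝ, β = (t : ℝ) + 2 * (k:ℝ) * Real.sqrt 2 := ⟨_, rfl⟩
  have hαX : S.α * X = β := by
    rw [hXdef, hβdef, hu0def, hv0def]
    unfold Setup.α
    push_cast
    linear_combination ((t:ℝ) + 2 * (k:ℝ) * Real.sqrt 2) * hH1R +
      (S.q:ℝ) * (2 * (k:ℝ) * (S.H:ℝ) - (t:ℝ) * (S.q:ℝ)) * h2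
  have hβu : β * ((t:ℝ) - 2 * (k:ℝ) * Real.sqrt 2) = 1 := by
    rw [hβdef]
    linear_combination hmR - (4 * (k:ℝ)^2) * h2
  have hα4 := S.alpha_ge
  have hαδ := S.delta_mul_alpha
  have hβpos : 0 < β := by rw [hβdef]; nlinarith
  have hkey2 : 1 < β * (2 * S.δ) := by
    have h' := mul_lt_mul_of_pos_left h1 hβpos
    linarith [hβu]
  have hβlow : S.α / 2 < β := by nlinarith [hkey2, hαδ, hd0, mul_pos hd0 hβpos]
  have hβhigh : β < 3 * S.α := by
    have hHgt := S.H_gt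
    have hβb : β < 4 * (k:ℝ) * Real.sqrt 2 + 2 * S.δ := by rw [hβdef]; nlinarith
    have hb2 : 4 * (k:ℝ) * Real.sqrt 2 ≤ 4 * (S.q:ℝ) * Real.sqrt 2 := by nlinarith
    have hα : S.α = (S.H:ℝ) + (S.q:ℝ) * Real.sqrt 2 := rfl
    nlinarith
  have hαpos := S.alpha_pos
  have hX1 : 1/2 < X := by
    have h' : S.α * (1/2) < S.α * X := by rw [hαX]; linarith
    exact lt_of_mul_lt_mul_left h' (le_of_lt hαpos)
  have hX3 : X < 3 := by
    have h' : S.α * X < S.α * 3 := by rw [hαX]; linarith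
    exact lt_of_mul_lt_mul_left h' (le_of_lt hαpos)
  have hXY : X * Y = 1 := by
    rw [hXdef, hYdef]
    linear_combination huvR - (v0:ℝ)^2 * h2
  have hY0 : 0 < Y := by
    by_contra h'
    push_neg at h'
    have h'' : X * Y ≤ 0 := mul_nonpos_of_nonneg_of_nonpos (by linarith) h'
    linarith [hXY]
  have hY1 : 1/3 < Y := by
    have h' := mul_lt_mul_of_pos_right hX3 hY0
    rw [hXY] at h'
    linarith
  have hY2 : Y < 2 := by
    have h' := mul_lt_mul_of_pos_right hX1 hY0
    rw [hXY] at h'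
    linarith
  have h2u : 2 * (u0:ℝ) = X + Y := by rw [hXdef, hYdef]; ring
  have h2v : 2 * (v0:ℝ) * Real.sqrt 2 = X - Y := by rw [hXdef, hYdef]; ring
  have hu0ge : (1 : ℤ) ≤ u0 := by
    have h' : (0:ℝ) < (u0:ℝ) := by linarith
    have h'' : (0:ℤ) < u0 := by exact_mod_cast h'
    omega
  have hv00 : v0 = 0 := by
    by_contra hv0ne
    rcases lt_or_gt_of_ne hv0ne with hneg | hpos
    · have h' : (v0:ℤ) ≤ -1 := by omega
      have h'' : ((v0:ℤ):ℝ) ≤ -1 := by exact_mod_cast h'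
      have hb : (v0:ℝ) * Real.sqrt 2 ≤ (-1) * Real.sqrt 2 :=
        mul_le_mul_of_nonneg_right h'' (Real.sqrt_nonneg 2)
      linarith [h2v, hX1, hY2, hsg]
    · have h' : (1:ℤ) ≤ v0 := hpos
      have h'' : (1:ℝ) ≤ ((v0:ℤ):ℝ) := by exact_mod_cast h'
      have hb : Real.sqrt 2 ≤ (v0:ℝ) * Real.sqrt 2 :=
        le_mul_of_one_le_left (Real.sqrt_nonneg 2) h''
      linarith [h2v, hX3, hY1, hsg]
  have hu01 : u0 = 1 := by
    have hsq1 : u0^2 = 1 := by rw [hv00] at huv; linarith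
    have e : (u0 - 1)^2 = u0^2 - 2*u0 + 1 := by ring
    have hle : u0 ≤ 1 := by linarith [sq_nonneg (u0 - 1), e, hsq1]
    omega
  have hXone : X = 1 := by rw [hXdef, hv00, hu01]; push_cast; ring
  have hβα : β = S.α := by rw [← hαX, hXone, mul_one]
  have heq : ((2 * (k:ℤ) - (S.q:ℤ)) : ℝ) * Real.sqrt 2 = (((S.H:ℤ) - t) : ℝ) := by
    have h' : (t:ℝ) + 2 * (k:ℝ) * Real.sqrt 2 = (S.H:ℝ) + (S.q:ℝ) * Real.sqrt 2 := by
      rw [← hβdef, hβα]; rfl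
    push_cast
    linear_combination h'
  have hmq : (2 * (k:ℤ)) = (S.q : ℤ) := by
    by_contra hmq
    have hirr : Irrational (((2 * (k:ℤ) - (S.q:ℤ)) : ℤ) * Real.sqrt 2) :=
      irrational_sqrt_two.intCast_mul (by omega)
    exact hirr.ne_int ((S.H:ℤ) - t) (by push_cast; push_cast at heq; linarith [heq])
  exact hne (by exact_mod_cast hmq)


lemma fract_q : Int.fract ((S.q : ℝ) * Real.sqrt 2) = 1 - S.δ := by
  have hd0 := S.delta_pos
  have hd4 := S.delta_le
  have he : (S.q : ℝ) * Real.sqrt 2 = (((S.H : ℤ) - 1 : ℤ) : ℝ) + (1 - S.δ) := by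
    unfold Setup.δ; push_cast; ring
  rw [he, Int.fract_intCast_add, Int.fract_eq_self.mpr ⟨by linarith, by linarith⟩]

lemma fract_2q : Int.fract (((S.q + S.q : ℕ) : ℝ) * Real.sqrt 2) = 1 - 2 * S.δ := by
  have hd0 := S.delta_pos
  have hd4 := S.delta_le
  have he : ((S.q + S.q : ℕ) : ℝ) * Real.sqrt 2
      = ((2 * (S.H : ℤ) - 1 : ℤ) : ℝ) + (1 - 2 * S.δ) := by
    unfold Setup.δ; push_cast; ring
  rw [he, Int.fract_intCast_add, Int.fract_eq_self.mpr ⟨by linarith, by linarith⟩]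

lemma fract_half : Int.fract (((S.q / 2 : ℕ) : ℝ) * Real.sqrt 2) = (1 - S.δ) / 2 := by
  have hd0 := S.delta_pos
  have hd4 := S.delta_le
  obtain ⟨c, hc⟩ := S.hqe
  obtain ⟨h, hh⟩ := S.hodd
  have hq2 : S.q / 2 = c := by omega
  have he : ((S.q / 2 : ℕ) : ℝ) * Real.sqrt 2 = ((h : ℤ) : ℝ) + (1 - S.δ) / 2 := by
    rw [hq2]
    have hcr : (2 : ℝ) * (c : ℝ) = (S.q : ℝ) := by
      have h' : (S.q : ℝ) = (c : ℝ) + (c : ℝ) := by exact_mod_cast hc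
      linarith
    have hhr : (S.H : ℝ) = 2 * (h : ℝ) + 1 := by exact_mod_cast hh
    unfold Setup.δ
    push_cast
    linear_combination (Real.sqrt 2 / 2) * hcr + (1/2) * hhr
  rw [he, Int.fract_intCast_add, Int.fract_eq_self.mpr ⟨by linarith, by linarith⟩]

lemma fract_shift (k : ℕ) (h : S.δ < Int.fract ((k : ℝ) * Real.sqrt 2)) :
    Int.fract (((k + S.q : ℕ) : ℝ) * Real.sqrt 2)
      = Int.fract ((k : ℝ) * Real.sqrt 2) - S.δ := by
  have hd0 := S.delta_pos
  have hfl := Int.floor_add_fract ((k : ℝ) * Real.sqrt 2)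
  have hlt := Int.fract_lt_one ((k : ℝ) * Real.sqrt 2)
  have he : ((k + S.q : ℕ) : ℝ) * Real.sqrt 2
      = (((S.H : ℤ) + ⌊(k : ℝ) * Real.sqrt 2⌋ : ℤ) : ℝ)
        + (Int.fract ((k : ℝ) * Real.sqrt 2) - S.δ) := by
    unfold Setup.δ
    push_cast
    linarith [hfl]
  rw [he, Int.fract_intCast_add, Int.fract_eq_self.mpr ⟨by linarith, by linarith⟩]

lemma fract_bounds (k : ℕ) (hk1 : 1 ≤ k) (hkq : k < S.q) :
    S.δ < Int.fract ((k : ℝ) * Real.sqrt 2)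
      ∧ Int.fract ((k : ℝ) * Real.sqrt 2) < 1 - S.δ := by
  have hfl := Int.floor_add_fract ((k : ℝ) * Real.sqrt 2)
  have hnn := Int.fract_nonneg ((k : ℝ) * Real.sqrt 2)
  have hlt := Int.fract_lt_one ((k : ℝ) * Real.sqrt 2)
  constructor
  · have h1 := S.K1 k hk1 hkq ⌊(k : ℝ) * Real.sqrt 2⌋
    rw [show (k : ℝ) * Real.sqrt 2 - (⌊(k : ℝ) * Real.sqrt 2⌋ : ℝ)
        = Int.fract ((k : ℝ) * Real.sqrt 2) from by linarith,
      abs_of_nonneg hnn] at h1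
    exact h1
  · have h1 := S.K1 k hk1 hkq (⌊(k : ℝ) * Real.sqrt 2⌋ + 1)
    rw [show (k : ℝ) * Real.sqrt 2 - ((⌊(k : ℝ) * Real.sqrt 2⌋ + 1 : ℤ) : ℝ)
        = Int.fract ((k : ℝ) * Real.sqrt 2) - 1 from by push_cast; linarith,
      abs_of_nonpos (by linarith)] at h1
    linarith

lemma fract_reflect (k : ℕ) (hk1 : 1 ≤ k) (hkq : k < S.q) :
    Int.fract (((S.q - k : ℕ) : ℝ) * Real.sqrt 2)
      = 1 - S.δ - Int.fract ((k : ℝ) * Real.sqrt 2) := by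
  obtain ⟨hb1, hb2⟩ := S.fract_bounds k hk1 hkq
  have hd0 := S.delta_pos
  have hfl := Int.floor_add_fract ((k : ℝ) * Real.sqrt 2)
  have hnn := Int.fract_nonneg ((k : ℝ) * Real.sqrt 2)
  have hcast : ((S.q - k : ℕ) : ℝ) = (S.q : ℝ) - (k : ℝ) := by
    have := Nat.cast_sub (le_of_lt hkq) (R := ℝ)
    exact this
  have he : ((S.q - k : ℕ) : ℝ) * Real.sqrt 2
      = (((S.H : ℤ) - ⌊(k : ℝ) * Real.sqrt 2⌋ - 1 : ℤ) : ℝ)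
        + (1 - S.δ - Int.fract ((k : ℝ) * Real.sqrt 2)) := by
    rw [hcast]
    unfold Setup.δ
    push_cast
    linarith [hfl]
  rw [he, Int.fract_intCast_add, Int.fract_eq_self.mpr ⟨by linarith, by linarith⟩]

/-- The main shift equivalence for the "A" condition. -/
lemma shift_iff (k : ℕ) (hk1 : 1 ≤ k) (hkq : k ≤ S.q) :
    (Int.fract (((k + S.q : ℕ) : ℝ) * Real.sqrt 2) < 1/2
      ↔ Int.fract ((k : ℝ) * Real.sqrt 2) < 1/2) := by
  have hd0 := S.delta_pos
  have hd4 := S.delta_le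
  rcases eq_or_lt_of_le hkq with heq | hlt
  · subst heq
    rw [S.fract_2q, S.fract_q]
    constructor <;> intro h <;> linarith
  · obtain ⟨hb1, hb2⟩ := S.fract_bounds k hk1 hlt
    rw [S.fract_shift k hb1]
    constructor
    · intro h
      by_contra hge
      push_neg at hge
      -- fract ≥ 1/2 but fract - δ < 1/2 : contradiction with K2
      have hfl := Int.floor_add_fract ((k : ℝ) * Real.sqrt 2)
      apply S.K2 k hk1 (le_of_lt hlt) (2 * ⌊(k : ℝ) * Real.sqrt 2⌋ + 1)
        ⟨⌊(k : ℝ) * Real.sqrt 2⌋, by ring⟩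
      · push_cast; linarith
      · push_cast; linarith
    · intro h; linarith

/-- The key reflection fact used in counting: for `1 ≤ k < q` with `2k ≠ q`,
if `fract (k√2) < 1/2` then in fact `fract (k√2) ≤ 1/2 - δ`. -/
lemma lt_half_strict (k : ℕ) (hk1 : 1 ≤ k) (hkq : k < S.q) (hne : 2 * k ≠ S.q)
    (h : Int.fract ((k : ℝ) * Real.sqrt 2) < 1/2) :
    Int.fract ((k : ℝ) * Real.sqrt 2) ≤ 1/2 - S.δ := by
  by_contra hgt
  push_neg at hgt
  have hfl := Int.floor_add_fract ((k : ℝ) * Real.sqrt 2)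
  apply S.K3 k hk1 hkq hne (2 * ⌊(k : ℝ) * Real.sqrt 2⌋ + 1)
    ⟨⌊(k : ℝ) * Real.sqrt 2⌋, by ring⟩
  · push_cast; linarith
  · push_cast; linarith


end Setup

section Counting

def pA : ℕ → Prop := fun k => 0 < k ∧ Int.fract ((k : ℝ) * Real.sqrt 2) < 1 / 2

def pB : ℕ → Prop := fun k => 0 < k ∧ 1 / 2 ≤ Int.fract ((k : ℝ) * Real.sqrt 2)

attribute [local instance] Classical.propDecidable

namespace Setup

variable (S : Setup)

lemma pA_half : pA (S.q / 2) := by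
  have hd0 := S.delta_pos
  have hq2 := S.hq2
  refine ⟨by omega, ?_⟩
  rw [S.fract_half]
  linarith

lemma pB_q : pB S.q := by
  have hd4 := S.delta_le
  have hq2 := S.hq2
  refine ⟨by omega, ?_⟩
  rw [S.fract_q]
  linarith

lemma not_pA_q : ¬ pA S.q := by
  intro h
  have := S.pB_q
  have h2 := h.2
  have h3 := this.2
  linarith

lemma not_pB_half : ¬ pB (S.q / 2) := by
  intro h
  have := S.pA_half
  linarith [h.2, this.2]

lemma shiftA : ∀ k, 1 ≤ k → k ≤ S.q → (pA k ↔ pA (k + S.q)) := by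
  intro k h1 h2
  have hiff := S.shift_iff k h1 h2
  constructor
  · rintro ⟨_, h⟩; exact ⟨by omega, hiff.mpr h⟩
  · rintro ⟨_, h⟩; exact ⟨by omega, hiff.mp h⟩

lemma shiftB : ∀ k, 1 ≤ k → k ≤ S.q → (pB k ↔ pB (k + S.q)) := by
  intro k h1 h2
  have hiff := S.shift_iff k h1 h2
  constructor
  · rintro ⟨_, h⟩; refine ⟨by omega, ?_⟩
    by_contra hlt
    push_neg at hlt
    exact absurd (hiff.mp hlt) (not_lt.mpr h)
  · rintro ⟨_, h⟩; refine ⟨by omega, ?_⟩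
    by_contra hlt
    push_neg at hlt
    exact absurd (hiff.mpr hlt) (not_lt.mpr h)

end Setup

lemma count_add_count (N : ℕ) : Nat.count pA (N + 1) + Nat.count pB (N + 1) = N := by
  induction N with
  | zero =>
    rw [Nat.count_succ, Nat.count_succ, Nat.count_zero, Nat.count_zero,
      if_neg (fun h : pA 0 => absurd h.1 (by omega)),
      if_neg (fun h : pB 0 => absurd h.1 (by omega))]
  | succ N ih =>
    by_cases hc : Int.fract (((N + 1 : ℕ) : ℝ) * Real.sqrt 2) < 1 / 2
    · have h1 : pA (N + 1) := ⟨Nat.succ_pos N, hc⟩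
      have h2 : ¬ pB (N + 1) := fun h => absurd h.2 (not_le.mpr hc)
      rw [show Nat.count pA (N + 1 + 1) = Nat.count pA (N + 1) + if pA (N + 1) then 1 else 0
          from Nat.count_succ _ _,
        show Nat.count pB (N + 1 + 1) = Nat.count pB (N + 1) + if pB (N + 1) then 1 else 0
          from Nat.count_succ _ _, if_pos h1, if_neg h2]
      omega
    · have h1 : ¬ pA (N + 1) := fun h => absurd h.2 hc
      have h2 : pB (N + 1) := ⟨Nat.succ_pos N, not_lt.mp hc⟩
      rw [show Nat.count pA (N + 1 + 1) = Nat.count pA (N + 1) + if pA (N + 1) then 1 else 0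
          from Nat.count_succ _ _,
        show Nat.count pB (N + 1 + 1) = Nat.count pB (N + 1) + if pB (N + 1) then 1 else 0
          from Nat.count_succ _ _, if_neg h1, if_pos h2]
      omega

namespace Setup

variable (S : Setup)

lemma cards_eq :
    (Finset.filter (fun k => pA k ∧ 2 * k ≠ S.q) (Finset.Ico 1 S.q)).card
      = (Finset.filter pB (Finset.Ico 1 S.q)).card := by
  have hd0 := S.delta_pos
  have hq2 := S.hq2
  apply Finset.card_nbij' (fun k => S.q - k) (fun k => S.q - k)
  · intro k hk
    simp only [Finset.mem_coe, Finset.mem_filter, Finset.mem_Ico] at hk ⊢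
    obtain ⟨⟨hk1, hkq⟩, hpa, hne⟩ := hk
    refine ⟨⟨by omega, by omega⟩, by omega, ?_⟩
    have hle := S.lt_half_strict k hk1 hkq hne hpa.2
    have hrefl := S.fract_reflect k hk1 hkq
    rw [hrefl]
    linarith
  · intro k hk
    simp only [Finset.mem_coe, Finset.mem_filter, Finset.mem_Ico] at hk ⊢
    obtain ⟨⟨hk1, hkq⟩, hpb⟩ := hk
    have hrefl := S.fract_reflect k hk1 hkq
    refine ⟨⟨by omega, by omega⟩, ⟨by omega, ?_⟩, ?_⟩
    · rw [hrefl]; linarith [hpb.2]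
    · intro hcon
      -- then k = q/2, but pB (q/2) is false
      have : k = S.q / 2 := by omega
      rw [this] at hpb
      exact S.not_pB_half hpb
  · intro k hk
    simp only [Finset.mem_coe, Finset.mem_filter, Finset.mem_Ico] at hk
    dsimp only
    omega
  · intro k hk
    simp only [Finset.mem_coe, Finset.mem_filter, Finset.mem_Ico] at hk
    dsimp only
    omega

lemma filterA_eq :
    Finset.filter pA (Finset.range (S.q + 1))
      = insert (S.q / 2) (Finset.filter (fun k => pA k ∧ 2 * k ≠ S.q) (Finset.Ico 1 S.q)) := by
  have hq2 := S.hq2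
  obtain ⟨c, hc⟩ := S.hqe
  ext k
  simp only [Finset.mem_filter, Finset.mem_range, Finset.mem_insert, Finset.mem_Ico]
  constructor
  · rintro ⟨hk, hpa⟩
    by_cases h2k : 2 * k = S.q
    · left; omega
    · right
      have hkq : k < S.q := by
        rcases Nat.lt_or_ge k S.q with h | h
        · exact h
        · exfalso
          have : k = S.q := by omega
          rw [this] at hpa
          exact S.not_pA_q hpa
      exact ⟨⟨hpa.1, hkq⟩, hpa, h2k⟩
  · rintro (h | ⟨⟨h1', h2'⟩, hpa, hne⟩)
    · subst h; exact ⟨by omega, S.pA_half⟩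
    · exact ⟨by omega, hpa⟩

lemma filterB_eq :
    Finset.filter pB (Finset.range (S.q + 1))
      = insert S.q (Finset.filter pB (Finset.Ico 1 S.q)) := by
  have hq2 := S.hq2
  ext k
  simp only [Finset.mem_filter, Finset.mem_range, Finset.mem_insert, Finset.mem_Ico]
  constructor
  · rintro ⟨hk, hpb⟩
    by_cases hkq : k = S.q
    · left; exact hkq
    · right; exact ⟨⟨hpb.1, by omega⟩, hpb⟩
  · rintro (h | ⟨⟨h1', h2'⟩, hpb⟩)
    · subst h; exact ⟨by omega, S.pB_q⟩
    · exact ⟨by omega, hpb⟩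

lemma countA_eq : Nat.count pA (S.q + 1) = S.q / 2 ∧ Nat.count pB (S.q + 1) = S.q / 2 := by
  have hq2 := S.hq2
  obtain ⟨c, hc⟩ := S.hqe
  have hsum := count_add_count S.q
  have e1 : Nat.count pA (S.q + 1) = (Finset.filter pA (Finset.range (S.q + 1))).card := by
    rw [Nat.count_eq_card_filter_range]
  have e2 : Nat.count pB (S.q + 1) = (Finset.filter pB (Finset.range (S.q + 1))).card := by
    rw [Nat.count_eq_card_filter_range]
  have h1 : (Finset.filter pA (Finset.range (S.q + 1))).card
      = (Finset.filter (fun k => pA k ∧ 2 * k ≠ S.q) (Finset.Ico 1 S.q)).card + 1 := by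
    rw [S.filterA_eq, Finset.card_insert_of_notMem (by
      intro hmem
      simp only [Finset.mem_filter, Finset.mem_Ico] at hmem
      exact absurd hmem.2.2 (by omega))]
  have h2 : (Finset.filter pB (Finset.range (S.q + 1))).card
      = (Finset.filter pB (Finset.Ico 1 S.q)).card + 1 := by
    rw [S.filterB_eq, Finset.card_insert_of_notMem (by
      intro hmem
      simp only [Finset.mem_filter, Finset.mem_Ico] at hmem
      omega)]
  have h3 := S.cards_eq
  omega

end Setup

end Counting

section Final

attribute [local instance] Classical.propDecidable

lemma nth_shift {p : ℕ → Prop} (hinf : (setOf p).Infinite) (hp0 : ¬ p 0) (q c i : ℕ)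
    (hc : Nat.count p (q + 1) = c)
    (hshift : ∀ k, 1 ≤ k → k ≤ q → (p k ↔ p (k + q)))
    (hi : i < c) : Nat.nth p (c + i) = q + Nat.nth p i := by
  have hm : p (Nat.nth p i) := Nat.nth_mem_of_infinite hinf i
  have hmc : Nat.count p (Nat.nth p i) = i := Nat.count_nth_of_infinite hinf i
  have hm1 : 1 ≤ Nat.nth p i := by
    rcases Nat.eq_zero_or_pos (Nat.nth p i) with h | h
    · exact absurd (h ▸ hm) hp0
    · exact h
  have hmq : Nat.nth p i ≤ q := by
    by_contra h
    push_neg at h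
    have := Nat.count_monotone p (show q + 1 ≤ Nat.nth p i from h)
    omega
  have key : ∀ m', 1 ≤ m' → m' ≤ q → Nat.count p (q + m') = c + Nat.count p m' := by
    intro m'
    induction m' with
    | zero => intro h; omega
    | succ m' ih =>
      intro _ hle
      rcases Nat.eq_zero_or_pos m' with h0 | h1
      · subst h0
        have hc1 : Nat.count p 1 = 0 := by
          rw [show (1 : ℕ) = 0 + 1 from rfl, Nat.count_succ, Nat.count_zero, if_neg hp0]
        show Nat.count p (q + 1) = c + Nat.count p 1
        omega
      · have hprev := ih h1 (by omega)
        have e1 : Nat.count p (q + (m' + 1))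
            = Nat.count p (q + m') + if p (q + m') then 1 else 0 := by
          rw [show q + (m' + 1) = (q + m') + 1 from rfl]
          exact Nat.count_succ _ _
        have e2 : Nat.count p (m' + 1) = Nat.count p m' + if p m' then 1 else 0 :=
          Nat.count_succ _ _
        by_cases hp : p m'
        · rw [e1, e2, if_pos hp, if_pos (by
            rw [add_comm]
            exact (hshift m' h1 (by omega)).mp hp)]
          omega
        · rw [e1, e2, if_neg hp, if_neg (by
            intro hq'
            exact hp ((hshift m' h1 (by omega)).mpr (by rwa [add_comm] at hq')))]
          omega
  have hpqm : p (q + Nat.nth p i) := by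
    rw [add_comm]
    exact (hshift _ hm1 hmq).mp hm
  have hcount : Nat.count p (q + Nat.nth p i) = c + i := by
    rw [key _ hm1 hmq, hmc]
  have hfin := Nat.nth_count hpqm
  rw [hcount] at hfin
  exact hfin

noncomputable def mkSetup (n : ℕ) (hn : 1 ≤ n) : Setup where
  q := pell (2 * n)
  H := Aux.comp (2 * n)
  hq2 := by have := Aux.le_pell (2 * n); omega
  hqe := Aux.pell_even n
  hsq := Aux.comp_sq_even n
  hodd := Aux.comp_odd _

lemma pA_infinite : (setOf pA).Infinite := by
  by_contra h
  rw [Set.not_infinite] at h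
  obtain ⟨N, hN⟩ := h.bddAbove
  have hmem : (mkSetup (N + 1) (by omega)).q / 2 ∈ setOf pA :=
    (mkSetup (N + 1) (by omega)).pA_half
  have hle := hN hmem
  have hq : (mkSetup (N + 1) (by omega)).q = pell (2 * (N + 1)) := rfl
  have hge := Aux.le_pell (2 * (N + 1))
  rw [hq] at hle
  omega

lemma pB_infinite : (setOf pB).Infinite := by
  by_contra h
  rw [Set.not_infinite] at h
  obtain ⟨N, hN⟩ := h.bddAbove
  have hmem : (mkSetup (N + 1) (by omega)).q ∈ setOf pB :=
    (mkSetup (N + 1) (by omega)).pB_q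
  have hle := hN hmem
  have hq : (mkSetup (N + 1) (by omega)).q = pell (2 * (N + 1)) := rfl
  have hge := Aux.le_pell (2 * (N + 1))
  rw [hq] at hle
  omega

end Final

theorem stmt_15 (n : ℕ) (hn : 1 ≤ n) (j : ℕ) (hj1 : 1 ≤ j) (hj2 : j ≤ pell (2 * n) / 2) :
    a (pell (2 * n) / 2 + j) = pell (2 * n) + a j ∧
    b (pell (2 * n) / 2 + j) = pell (2 * n) + b j := by
  classical
  set S := mkSetup n hn with hS
  have hq : pell (2 * n) = S.q := rfl
  have hA0 : ¬ pA 0 := fun h => absurd h.1 (by omega)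
  have hB0 : ¬ pB 0 := fun h => absurd h.1 (by omega)
  obtain ⟨hcA, hcB⟩ := S.countA_eq
  have hj2' : j - 1 < S.q / 2 := by rw [hq] at hj2; omega
  have h1 := nth_shift pA_infinite hA0 S.q (S.q / 2) (j - 1) hcA S.shiftA hj2'
  have h2 := nth_shift pB_infinite hB0 S.q (S.q / 2) (j - 1) hcB S.shiftB hj2'
  have e : S.q / 2 + j - 1 = S.q / 2 + (j - 1) := by omega
  constructor
  · show Nat.nth pA (pell (2 * n) / 2 + j - 1) = pell (2 * n) + Nat.nth pA (j - 1)
    rw [hq, e]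
    exact h1
  · show Nat.nth pB (pell (2 * n) / 2 + j - 1) = pell (2 * n) + Nat.nth pB (j - 1)
    rw [hq, e]
    exact h2
end

section
/- For every integer m > 1, the number (P_{2m} + 2m)/4 is an integer and b((P_{2m} + 2m)/4) − a((P_{2m} + 2m)/4) = a(m). -/
namespace S17

def Qc : ℕ → ℕ
  | 0 => 1
  | 1 => 1
  | n + 2 => 2 * Qc (n + 1) + Qc n

lemma stepPQ (n : ℕ) :
    pell (n+1) = pell n + Qc n ∧ Qc (n+1) = Qc n + 2 * pell n := by
  induction n with
  | zero => simp [pell, Qc]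
  | succ n ih => simp only [pell, Qc]; omega

lemma stepP (n : ℕ) : pell (n+1) = pell n + Qc n := (stepPQ n).1
lemma stepQ (n : ℕ) : Qc (n+1) = Qc n + 2 * pell n := (stepPQ n).2

lemma pell_pos : ∀ n, 0 < n → 0 < pell n
  | 1, _ => by simp [pell]
  | (n+2), _ => by have := pell_pos (n+1) (by omega); simp [pell]; omega

lemma Qc_pos (n : ℕ) : 0 < Qc n := by
  induction n with
  | zero => simp [Qc]
  | succ n ih => rw [stepQ]; omega

lemma pell_strictMono : StrictMono pell := by
  apply strictMono_nat_of_lt_succ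
  intro n
  rw [stepP]
  have := Qc_pos n
  omega

lemma pell_mono : Monotone pell := pell_strictMono.monotone

lemma pell_ge_self (n : ℕ) : n ≤ pell n := by
  induction n with
  | zero => simp
  | succ n ih =>
    have := pell_strictMono (Nat.lt_succ_self n)
    simp only [Nat.succ_eq_add_one] at *
    omega

lemma Qc_odd (n : ℕ) : Qc n % 2 = 1 := by
  induction n with
  | zero => simp [Qc]
  | succ n ih => rw [stepQ]; omega

lemma pell_even (m : ℕ) : 2 ∣ pell (2 * m) := by
  induction m with
  | zero => simp [pell]
  | succ m ih =>
    have h1 : 2 * (m + 1) = (2 * m + 1) + 1 := by ring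
    rw [h1, stepP, stepP]
    have := Qc_odd (2 * m)
    have := Qc_odd (2 * m + 1)
    omega

end S17


namespace S17

noncomputable abbrev s : ℝ := Real.sqrt 2

lemma s_sq : s ^ 2 = 2 := Real.sq_sqrt (by norm_num)

lemma s_pos : 0 < s := Real.sqrt_pos.mpr (by norm_num)

lemma s_gt_one : 1 < s := by nlinarith [s_sq, s_pos]

lemma s_lt : s < 3 / 2 := by nlinarith [s_sq, s_pos]

lemma beta_pos : 0 < s - 1 := by linarith [s_gt_one]

lemma beta_lt_half : s - 1 < 1 / 2 := by linarith [s_lt]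

lemma id1 (n : ℕ) : (Qc n : ℝ) - s * pell n = (-(s - 1)) ^ n := by
  induction n with
  | zero => simp [Qc, pell]
  | succ n ih =>
    rw [stepP, stepQ, pow_succ]
    push_cast
    linear_combination (1 - s) * ih - (pell n : ℝ) * s_sq

lemma id2 (n : ℕ) : (Qc n : ℝ) + s * pell n = (s + 1) ^ n := by
  induction n with
  | zero => simp [Qc, pell]
  | succ n ih =>
    rw [stepP, stepQ, pow_succ]
    push_cast
    linear_combination (s + 1) * ih - (pell n : ℝ) * s_sq

lemma id1_even (m : ℕ) : (Qc (2 * m) : ℝ) - s * pell (2 * m) = (s - 1) ^ (2 * m) := by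
  rw [id1, Even.neg_pow (even_two_mul m)]

lemma id1_odd (t : ℕ) : s * pell (2 * t + 1) - (Qc (2 * t + 1) : ℝ) = (s - 1) ^ (2 * t + 1) := by
  have := id1 (2 * t + 1)
  rw [Odd.neg_pow ⟨t, by ring⟩] at this
  linarith

lemma unit_inv (m : ℕ) : (s - 1) ^ (2 * m) * ((Qc (2 * m) : ℝ) + s * pell (2 * m)) = 1 := by
  rw [id2, ← mul_pow]
  have h : (s - 1) * (s + 1) = 1 := by nlinarith [s_sq]
  rw [h, one_pow]

lemma beta_pow_pos (n : ℕ) : 0 < (s - 1) ^ n := pow_pos beta_pos n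

lemma beta_pow_lt_one (n : ℕ) (hn : 0 < n) : (s - 1) ^ n < 1 := by
  apply pow_lt_one₀ (le_of_lt beta_pos) (by linarith [beta_lt_half]) (by omega)

end S17


namespace S17

lemma QQ (n : ℕ) : (Qc n : ℤ) ^ 2 = 2 * (pell n : ℤ) ^ 2 + (-1) ^ n := by
  induction n with
  | zero => simp [Qc, pell]
  | succ n ih =>
    rw [stepP, stepQ]
    push_cast
    push_cast at ih
    linear_combination (-1 : ℤ) * ih

lemma QQ_odd (t : ℕ) : 2 * pell (2 * t + 1) ^ 2 = Qc (2 * t + 1) ^ 2 + 1 := by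
  have h := QQ (2 * t + 1)
  have : (-1 : ℤ) ^ (2 * t + 1) = -1 := Odd.neg_one_pow ⟨t, by ring⟩
  rw [this] at h
  have h2 : (2 * (pell (2*t+1))^2 : ℤ) = ((Qc (2*t+1))^2 + 1 : ℤ) := by linarith
  exact_mod_cast h2

/-- Negative Pell equation: solutions of `2k² = i² + 1` are odd-indexed Pell numbers. -/
lemma NP : ∀ k : ℕ, 0 < k → ∀ i : ℕ, 2 * k ^ 2 = i ^ 2 + 1 →
    ∃ t, k = pell (2 * t + 1) ∧ i = Qc (2 * t + 1) := by
  intro k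
  induction k using Nat.strong_induction_on with
  | _ k IH =>
    intro hk i hi
    rcases Nat.lt_or_ge k 3 with hk3 | hk3
    · interval_cases k
      · -- k = 1
        have hi1 : i = 1 := by nlinarith
        exact ⟨0, by simp [pell], by simp [hi1, Qc]⟩
      · -- k = 2
        exfalso
        have h7 : i ^ 2 = 7 := by omega
        have hle : i < 3 := by nlinarith
        interval_cases i <;> omega
    · -- k ≥ 3 : descent
      have hik : k < i := by
        by_contra h
        push_neg at h
        have := Nat.pow_le_pow_left h 2
        nlinarith
      have h2i3k : 2 * i ≤ 3 * k := by
        by_contra h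
        push_neg at h
        have := Nat.pow_le_pow_left (by omega : 3 * k + 1 ≤ 2 * i) 2
        nlinarith
      have h4k3i : 4 * k ≤ 3 * i := by
        by_contra h
        push_neg at h
        have := Nat.pow_le_pow_left (by omega : 3 * i + 1 ≤ 4 * k) 2
        nlinarith
      set k' := 3 * k - 2 * i with hk'
      set i' := 3 * i - 4 * k with hi'
      have hk'pos : 0 < k' := by
        have : (2 * i) ^ 2 < (3 * k) ^ 2 := by nlinarith
        have : 2 * i < 3 * k := by
          by_contra h; push_neg at h
          exact absurd (Nat.pow_le_pow_left h 2) (by omega)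
        omega
      have hk'lt : k' < k := by omega
      have heq : 2 * k' ^ 2 = i' ^ 2 + 1 := by
        simp only [hk', hi']
        zify [h2i3k, h4k3i]
        zify at hi
        nlinarith
      obtain ⟨t, ht1, ht2⟩ := IH k' hk'lt hk'pos i' heq
      refine ⟨t + 1, ?_, ?_⟩
      · have e1 : pell (2 * (t + 1) + 1) = 3 * pell (2 * t + 1) + 2 * Qc (2 * t + 1) := by
          have a1 := stepP (2 * t + 2); have a2 := stepP (2 * t + 1)
          have a3 := stepQ (2 * t + 1)
          rw [show 2*t+1+1 = 2*t+2 by ring] at a2 a3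
          have : 2 * (t + 1) + 1 = (2 * t + 2) + 1 := by ring
          rw [this]
          omega
        rw [e1, ← ht1, ← ht2]
        omega
      · have e2 : Qc (2 * (t + 1) + 1) = 3 * Qc (2 * t + 1) + 4 * pell (2 * t + 1) := by
          have a1 := stepQ (2 * t + 2); have a2 := stepP (2 * t + 1)
          have a3 := stepQ (2 * t + 1)
          rw [show 2*t+1+1 = 2*t+2 by ring] at a2 a3
          have : 2 * (t + 1) + 1 = (2 * t + 2) + 1 := by ring
          rw [this]
          omega
        rw [e2, ← ht1, ← ht2]
        omega

end S17


namespace S17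

lemma irr_ks (k : ℕ) (hk : 0 < k) : Irrational ((k : ℝ) * s) :=
  irrational_sqrt_two.natCast_mul (by omega)

lemma fract_eq_of (x : ℝ) (i : ℤ) (h1 : (i : ℝ) ≤ x) (h2 : x < i + 1) :
    Int.fract x = x - i := by
  have : ⌊x⌋ = i := Int.floor_eq_iff.mpr ⟨h1, h2⟩
  rw [Int.fract, this]

lemma fract_pos_of_irrational (x : ℝ) (h : Irrational x) : 0 < Int.fract x := by
  rcases lt_or_eq_of_le (Int.fract_nonneg x) with h1 | h1
  · exact h1
  · exfalso
    have : x = (⌊x⌋ : ℝ) := by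
      have := Int.fract_add_floor x
      rw [← h1] at this
      simpa using this.symm
    exact h.ne_int ⌊x⌋ this

lemma size2 (m : ℕ) : 2 * (s * ((pell (2 * m) : ℝ) + (Qc (2 * m) : ℝ))) ≤
    4 * ((Qc (2 * m) : ℝ) + s * pell (2 * m)) := by
  have hq : (0 : ℝ) ≤ (Qc (2 * m) : ℝ) := by positivity
  have hp : (0 : ℝ) ≤ (pell (2 * m) : ℝ) := by positivity
  nlinarith [s_lt, s_pos]

/-- Lower bound on `fract (k√2)` in the flip range. -/
lemma G1 (m : ℕ) (hm : 1 ≤ m) (k : ℕ) (hk : 1 ≤ k) (hk2 : k < pell (2 * m + 1)) :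
    (s - 1) ^ (2 * m) / 2 ≤ Int.fract ((k : ℝ) * s) := by
  set x : ℝ := (k : ℝ) * s with hx
  have hxpos : (1 : ℝ) < x := by
    have : (1 : ℝ) ≤ (k : ℝ) := by exact_mod_cast hk
    nlinarith [s_gt_one, s_pos]
  set i : ℤ := ⌊x⌋ with hi
  have hi1 : 1 ≤ i := by
    rw [hi]
    exact Int.le_floor.mpr (by exact_mod_cast hxpos.le)
  have hinn : (0 : ℝ) ≤ (i : ℝ) := by exact_mod_cast (by omega : (0:ℤ) ≤ i)
  have hfr : Int.fract x = x - i := rfl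
  have hfrpos : 0 < Int.fract x := fract_pos_of_irrational x (irr_ks k hk)
  have hilt : (i : ℝ) < x := by rw [hfr] at hfrpos; linarith
  have hxipos : (0 : ℝ) < x + i := by linarith
  have hprod : Int.fract x * (x + i) = 2 * (k : ℝ) ^ 2 - (i : ℝ) ^ 2 := by
    rw [hfr, hx]
    have h2 : ((k : ℝ) * s) ^ 2 = 2 * (k : ℝ) ^ 2 := by
      rw [mul_pow, s_sq]; ring
    nlinarith [h2]
  have hrpos : (0 : ℝ) < 2 * (k : ℝ) ^ 2 - (i : ℝ) ^ 2 := by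
    rw [← hprod]; positivity
  have hrint : (1 : ℤ) ≤ 2 * (k : ℤ) ^ 2 - i ^ 2 := by
    have h0 : (0 : ℝ) < ((2 * (k : ℤ) ^ 2 - i ^ 2 : ℤ) : ℝ) := by push_cast; linarith
    have h0' : (0 : ℤ) < 2 * (k : ℤ) ^ 2 - i ^ 2 := by exact_mod_cast h0
    omega
  have hQP := unit_inv m
  have hbp : (0 : ℝ) < (s - 1) ^ (2 * m) := beta_pow_pos (2 * m)
  have hq : (0 : ℝ) ≤ (Qc (2 * m) : ℝ) := by positivity
  have hp : (0 : ℝ) ≤ (pell (2 * m) : ℝ) := by positivity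
  rcases eq_or_lt_of_le hrint with hr1 | hr2
  · -- r = 1 : negative Pell case
    have hnat : 2 * k ^ 2 = i.toNat ^ 2 + 1 := by
      have hit : (i.toNat : ℤ) = i := Int.toNat_of_nonneg (by omega)
      have h2 : 2 * (k : ℤ) ^ 2 = (i.toNat : ℤ) ^ 2 + 1 := by rw [hit]; omega
      exact_mod_cast h2
    obtain ⟨t, ht, _⟩ := NP k hk i.toNat hnat
    have hkle : k ≤ pell (2 * m) := by
      have h1 : 2 * t + 1 < 2 * m + 1 := by
        by_contra h
        push_neg at h
        exact absurd (pell_mono h) (by omega)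
      rw [ht]
      exact pell_mono (by omega : 2 * t + 1 ≤ 2 * m)
    have hp1 : Int.fract x * (x + i) = 1 := by
      rw [hprod]
      have h2 : ((2 * (k : ℤ) ^ 2 - i ^ 2 : ℤ) : ℝ) = 1 := by rw [← hr1]; norm_num
      push_cast at h2
      linarith
    have hxb : x ≤ s * pell (2 * m) := by
      rw [hx, mul_comm]
      exact mul_le_mul_of_nonneg_left (by exact_mod_cast hkle) s_pos.le
    have hbound : (s - 1) ^ (2 * m) * (x + i) ≤ 2 := by
      have h1 : x + i ≤ 2 * ((Qc (2 * m) : ℝ) + s * pell (2 * m)) := by linarith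
      have h2 : (s - 1) ^ (2 * m) * (x + i) ≤
          (s - 1) ^ (2 * m) * (2 * ((Qc (2 * m) : ℝ) + s * pell (2 * m))) :=
        mul_le_mul_of_nonneg_left h1 hbp.le
      have e : (s - 1) ^ (2 * m) * (2 * ((Qc (2 * m) : ℝ) + s * pell (2 * m))) =
          2 * ((s - 1) ^ (2 * m) * ((Qc (2 * m) : ℝ) + s * pell (2 * m))) := by ring
      rw [e, hQP] at h2
      linarith
    by_contra hcon
    push_neg at hcon
    have h6 := mul_lt_mul_of_pos_right hcon hxipos
    have e : (s - 1) ^ (2 * m) / 2 * (x + i) = ((s - 1) ^ (2 * m) * (x + i)) / 2 := by ring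
    rw [hp1, e] at h6
    linarith [hbound]
  · -- r ≥ 2
    have h2z : (2 : ℤ) ≤ 2 * (k : ℤ) ^ 2 - i ^ 2 := hr2
    have hr2' : (2 : ℝ) ≤ 2 * (k : ℝ) ^ 2 - (i : ℝ) ^ 2 := by exact_mod_cast h2z
    have hxb : x ≤ s * ((pell (2 * m) : ℝ) + (Qc (2 * m) : ℝ)) := by
      have hkle : (k : ℝ) ≤ (pell (2 * m) : ℝ) + (Qc (2 * m) : ℝ) := by
        have h3 : k ≤ pell (2 * m) + Qc (2 * m) := by
          have := stepP (2 * m); omega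
        exact_mod_cast h3
      rw [hx, mul_comm]
      exact mul_le_mul_of_nonneg_left hkle s_pos.le
    have hbound : (s - 1) ^ (2 * m) * (x + i) ≤ 4 := by
      have h1 : x + i ≤ 4 * ((Qc (2 * m) : ℝ) + s * pell (2 * m)) := by
        have := size2 m
        linarith
      have h2 : (s - 1) ^ (2 * m) * (x + i) ≤
          (s - 1) ^ (2 * m) * (4 * ((Qc (2 * m) : ℝ) + s * pell (2 * m))) :=
        mul_le_mul_of_nonneg_left h1 hbp.le
      have e : (s - 1) ^ (2 * m) * (4 * ((Qc (2 * m) : ℝ) + s * pell (2 * m))) =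
          4 * ((s - 1) ^ (2 * m) * ((Qc (2 * m) : ℝ) + s * pell (2 * m))) := by ring
      rw [e, hQP] at h2
      linarith
    have hp2 : (2 : ℝ) ≤ Int.fract x * (x + i) := by rw [hprod]; linarith
    by_contra hcon
    push_neg at hcon
    have h6 := mul_lt_mul_of_pos_right hcon hxipos
    have e : (s - 1) ^ (2 * m) / 2 * (x + i) = ((s - 1) ^ (2 * m) * (x + i)) / 2 := by ring
    rw [e] at h6
    linarith [hbound, hp2]

end S17


namespace S17

lemma size7 (m : ℕ) : 4 * (s * ((pell (2 * m) : ℝ) + (Qc (2 * m) : ℝ))) ≤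
    7 * ((Qc (2 * m) : ℝ) + s * pell (2 * m)) := by
  have hq : (0 : ℝ) ≤ (Qc (2 * m) : ℝ) := by positivity
  have hp : (0 : ℝ) ≤ (pell (2 * m) : ℝ) := by positivity
  nlinarith [s_lt, s_pos]

/-- No `fract (k√2)` lies in `[1/2, 1/2 + β^{2m}/2)` in the flip range. -/
lemma G2 (m : ℕ) (k : ℕ) (hk : 1 ≤ k) (hk2 : k < pell (2 * m + 1))
    (hge : 1 / 2 ≤ Int.fract ((k : ℝ) * s)) :
    1 / 2 + (s - 1) ^ (2 * m) / 2 ≤ Int.fract ((k : ℝ) * s) := by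
  by_contra hcon
  push_neg at hcon
  set x : ℝ := (k : ℝ) * s with hx
  set i : ℤ := ⌊x⌋ with hi
  have hfr : Int.fract x = x - i := rfl
  set j : ℤ := 2 * i + 1 with hj
  have hbp : (0 : ℝ) < (s - 1) ^ (2 * m) := beta_pow_pos (2 * m)
  -- v = 2x - j ∈ (0, β^(2m))
  have hvlow : 0 < 2 * x - (j : ℝ) := by
    have hirr : Irrational (2 * x) := by
      have : ((2 * k : ℕ) : ℝ) * s = 2 * x := by push_cast; ring
      rw [← this]
      exact irr_ks (2 * k) (by omega)
    rcases lt_trichotomy (2 * x - (j : ℝ)) 0 with h | h | h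
    · exfalso
      rw [hfr] at hge
      push_cast [hj] at h
      linarith
    · exfalso
      exact hirr.ne_int j (by linarith)
    · exact h
  have hvhigh : 2 * x - (j : ℝ) < (s - 1) ^ (2 * m) := by
    rw [hfr] at hcon
    push_cast [hj]
    linarith
  -- the product identity
  have hsq : (2 * x) ^ 2 = 8 * (k : ℝ) ^ 2 := by
    rw [hx, mul_pow, mul_pow, s_sq]; ring
  have hprod : (2 * x - j) * (2 * x + j) = 8 * (k : ℝ) ^ 2 - (j : ℝ) ^ 2 := by
    nlinarith [hsq]
  -- r' = 8k² - j² ≥ 7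
  have hjpos : (0 : ℝ) < (j : ℝ) := by
    have : (0 : ℝ) ≤ (i : ℝ) := by
      have : (0 : ℤ) ≤ i := by
        rw [hi]
        apply Int.le_floor.mpr
        have : (1 : ℝ) ≤ (k : ℝ) := by exact_mod_cast hk
        push_cast
        nlinarith [s_gt_one]
      exact_mod_cast this
    push_cast [hj]
    linarith
  have hrpos : (0 : ℝ) < 8 * (k : ℝ) ^ 2 - (j : ℝ) ^ 2 := by
    rw [← hprod]
    apply mul_pos hvlow
    nlinarith [hvlow, hjpos]
  have hrint : (7 : ℤ) ≤ 8 * (k : ℤ) ^ 2 - j ^ 2 := by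
    have h1 : (0 : ℤ) < 8 * (k : ℤ) ^ 2 - j ^ 2 := by
      have : (0 : ℝ) < ((8 * (k : ℤ) ^ 2 - j ^ 2 : ℤ) : ℝ) := by push_cast; linarith
      exact_mod_cast this
    obtain ⟨e, he⟩ := Int.even_mul_succ_self i
    have hjsq : j ^ 2 = 8 * e + 1 := by rw [hj]; nlinarith [he]
    omega
  have hr7 : (7 : ℝ) ≤ (2 * x - j) * (2 * x + j) := by
    rw [hprod]
    have : ((8 * (k : ℤ) ^ 2 - j ^ 2 : ℤ) : ℝ) ≥ 7 := by exact_mod_cast hrint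
    push_cast at this
    linarith
  -- size bound
  have hjle : (j : ℝ) ≤ 2 * x := by linarith
  have hxb : x ≤ s * ((pell (2 * m) : ℝ) + (Qc (2 * m) : ℝ)) := by
    have hkle : (k : ℝ) ≤ (pell (2 * m) : ℝ) + (Qc (2 * m) : ℝ) := by
      have h3 : k ≤ pell (2 * m) + Qc (2 * m) := by
        have := stepP (2 * m); omega
      exact_mod_cast h3
    rw [hx, mul_comm]
    exact mul_le_mul_of_nonneg_left hkle s_pos.le
  have h2xj : 2 * x + (j : ℝ) ≤ 4 * (s * ((pell (2 * m) : ℝ) + (Qc (2 * m) : ℝ))) := by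
    linarith
  have hfinal : (2 * x - j) * (2 * x + j) < 7 := by
    have hpos2 : (0 : ℝ) < 2 * x + j := by nlinarith [hvlow, hjpos]
    have h1 : (2 * x - j) * (2 * x + j) < (s - 1) ^ (2 * m) * (2 * x + j) :=
      mul_lt_mul_of_pos_right hvhigh hpos2
    have h2 : (s - 1) ^ (2 * m) * (2 * x + j) ≤
        (s - 1) ^ (2 * m) * (7 * ((Qc (2 * m) : ℝ) + s * pell (2 * m))) := by
      apply mul_le_mul_of_nonneg_left _ hbp.le
      linarith [size7 m]
    have e : (s - 1) ^ (2 * m) * (7 * ((Qc (2 * m) : ℝ) + s * pell (2 * m))) =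
        7 * ((s - 1) ^ (2 * m) * ((Qc (2 * m) : ℝ) + s * pell (2 * m))) := by ring
    rw [e, unit_inv m] at h2
    linarith
  linarith [hr7, hfinal]

end S17


namespace S17

open scoped Classical

/-- predicate for the `a`-sequence -/
def Pp (k : ℕ) : Prop := 0 < k ∧ Int.fract ((k : ℝ) * Real.sqrt 2) < 1 / 2
/-- predicate for the `b`-sequence -/
def Qp (k : ℕ) : Prop := 0 < k ∧ 1 / 2 ≤ Int.fract ((k : ℝ) * Real.sqrt 2)

lemma fract_pell_odd (t : ℕ) :
    Int.fract ((pell (2 * t + 1) : ℝ) * s) = (s - 1) ^ (2 * t + 1) := by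
  have h := id1_odd t
  have h1 : (0:ℝ) < (s - 1) ^ (2 * t + 1) := beta_pow_pos _
  have h2 : (s - 1) ^ (2 * t + 1) < 1 := beta_pow_lt_one _ (by omega)
  have hfe := fract_eq_of ((pell (2 * t + 1) : ℝ) * s) (Qc (2 * t + 1) : ℤ)
    (by push_cast; nlinarith [h]) (by push_cast; nlinarith [h])
  rw [hfe]
  push_cast
  nlinarith [h]

lemma fract_pell_even (t : ℕ) (ht : 1 ≤ t) :
    Int.fract ((pell (2 * t) : ℝ) * s) = 1 - (s - 1) ^ (2 * t) := by
  have h := id1_even t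
  have h1 : (0:ℝ) < (s - 1) ^ (2 * t) := beta_pow_pos _
  have h2 : (s - 1) ^ (2 * t) < 1 := beta_pow_lt_one _ (by omega)
  have hfe := fract_eq_of ((pell (2 * t) : ℝ) * s) ((Qc (2 * t) : ℤ) - 1)
    (by push_cast; nlinarith [h]) (by push_cast; nlinarith [h])
  rw [hfe]
  push_cast
  nlinarith [h]

lemma fract_H (m : ℕ) (hm : 1 ≤ m) (H : ℕ) (hH : 2 * H = pell (2 * m)) :
    Int.fract ((H : ℝ) * s) = 1 / 2 - (s - 1) ^ (2 * m) / 2 := by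
  obtain ⟨c, hc⟩ : ∃ c, Qc (2 * m) = 2 * c + 1 := ⟨Qc (2 * m) / 2, by have := Qc_odd (2 * m); omega⟩
  have h := id1_even m
  have h1 : (0:ℝ) < (s - 1) ^ (2 * m) := beta_pow_pos _
  have h2 : (s - 1) ^ (2 * m) < 1 := beta_pow_lt_one _ (by omega)
  have hps : (pell (2 * m) : ℝ) = 2 * (H : ℝ) := by exact_mod_cast congrArg (Nat.cast (R := ℝ)) hH.symm
  have hqs : (Qc (2 * m) : ℝ) = 2 * (c : ℝ) + 1 := by exact_mod_cast congrArg (Nat.cast (R := ℝ)) hc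
  rw [hps, hqs] at h
  have hfe := fract_eq_of ((H : ℝ) * s) (c : ℤ)
    (by push_cast; nlinarith [h]) (by push_cast; nlinarith [h])
  rw [hfe]
  push_cast
  nlinarith [h]

lemma H_pos (m : ℕ) (hm : 1 ≤ m) (H : ℕ) (hH : 2 * H = pell (2 * m)) : 0 < H := by
  have : 0 < pell (2 * m) := pell_pos _ (by omega)
  omega

lemma Pp_H (m : ℕ) (hm : 1 ≤ m) (H : ℕ) (hH : 2 * H = pell (2 * m)) : Pp H := by
  refine ⟨H_pos m hm H hH, ?_⟩
  rw [fract_H m hm H hH]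
  have := beta_pow_pos (2 * m)
  linarith

/-- The key flip symmetry across `H = pell (2m) / 2`. -/
lemma flip (m : ℕ) (hm : 1 ≤ m) (H : ℕ) (hH : 2 * H = pell (2 * m))
    (k : ℕ) (hk : 1 ≤ k) (hk2 : k < pell (2 * m + 1)) :
    (Int.fract ((k : ℝ) * s) < 1 / 2 → 1 / 2 ≤ Int.fract (((H + k : ℕ) : ℝ) * s)) ∧
    (1 / 2 ≤ Int.fract ((k : ℝ) * s) → Int.fract (((H + k : ℕ) : ℝ) * s) < 1 / 2) := by
  have hfH := fract_H m hm H hH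
  set β : ℝ := (s - 1) ^ (2 * m) with hβ
  have hb0 : 0 < β := beta_pow_pos _
  have hb1 : β < 1 := beta_pow_lt_one _ (by omega)
  set u : ℝ := Int.fract ((k : ℝ) * s) with hu
  have hu0 : 0 ≤ u := Int.fract_nonneg _
  have hu1 : u < 1 := Int.fract_lt_one _
  set FH : ℤ := ⌊(H : ℝ) * s⌋ with hFH
  set FK : ℤ := ⌊(k : ℝ) * s⌋ with hFK
  have eH : (H : ℝ) * s = (FH : ℝ) + (1 / 2 - β / 2) := by
    have := Int.floor_add_fract ((H : ℝ) * s)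
    rw [hfH] at this
    rw [hFH]
    linarith
  have ek : (k : ℝ) * s = (FK : ℝ) + u := by
    have := Int.floor_add_fract ((k : ℝ) * s)
    rw [hFK, hu]
    linarith
  have ex : ((H + k : ℕ) : ℝ) * s = (H : ℝ) * s + (k : ℝ) * s := by push_cast; ring
  constructor
  · intro hlt
    have hG1 := G1 m hm k hk hk2
    rw [← hu, ← hβ] at hG1
    have hfe := fract_eq_of (((H + k : ℕ) : ℝ) * s) (FH + FK)
      (by rw [ex, eH, ek]; push_cast; linarith)
      (by rw [ex, eH, ek]; push_cast; linarith)
    rw [hfe, ex, eH, ek]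
    push_cast
    linarith
  · intro hge
    have hG2 := G2 m k hk hk2 (by rw [← hu]; exact hge)
    rw [← hu, ← hβ] at hG2
    have hfe := fract_eq_of (((H + k : ℕ) : ℝ) * s) (FH + FK + 1)
      (by rw [ex, eH, ek]; push_cast; linarith)
      (by rw [ex, eH, ek]; push_cast; linarith)
    rw [hfe, ex, eH, ek]
    push_cast
    linarith

/-- Counting form of the flip symmetry. -/
lemma count_flip (m : ℕ) (hm : 1 ≤ m) (H : ℕ) (hH : 2 * H = pell (2 * m)) :
    ∀ c : ℕ, 1 ≤ c → c ≤ pell (2 * m + 1) →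
      Nat.count Pp (H + c) = Nat.count Pp H + 1 + Nat.count Qp c ∧
      Nat.count Qp (H + c) = Nat.count Qp H + Nat.count Pp c := by
  intro c
  induction c with
  | zero => omega
  | succ n ih =>
    intro h1 h2
    rcases Nat.eq_zero_or_pos n with hn | hn
    · subst hn
      have hPH : Pp H := Pp_H m hm H hH
      have hQH : ¬ Qp H := by
        intro hq
        have := hPH.2
        have := hq.2
        linarith
      constructor
      · rw [show H + 1 = H + 1 from rfl, Nat.count_succ, Nat.count_succ]
        simp [hPH, hQH, Nat.count_zero, show ¬ Qp 0 from fun h => by simp [Qp] at h]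
      · rw [Nat.count_succ, Nat.count_succ]
        simp [hQH, Nat.count_zero, show ¬ Pp 0 from fun h => by simp [Pp] at h]
    · obtain ⟨ihP, ihQ⟩ := ih (by omega) (by omega)
      have hnlt : n < pell (2 * m + 1) := by omega
      have hflip := flip m hm H hH n hn hnlt
      have hiff1 : Pp (H + n) ↔ Qp n := by
        constructor
        · intro hp
          refine ⟨hn, ?_⟩
          by_contra hq
          push_neg at hq
          have := hflip.1 hq
          have := hp.2
          linarith
        · intro hq
          refine ⟨by omega, hflip.2 hq.2⟩
      have hiff2 : Qp (H + n) ↔ Pp n := by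
        constructor
        · intro hq
          refine ⟨hn, ?_⟩
          by_contra hp
          push_neg at hp
          have := hflip.2 hp
          have := hq.2
          linarith
        · intro hp
          refine ⟨by omega, hflip.1 hp.2⟩
      constructor
      · rw [show H + (n + 1) = (H + n) + 1 by omega, Nat.count_succ, Nat.count_succ, ihP]
        simp only [hiff1]
        by_cases hq : Qp n <;> simp [hq] <;> omega
      · rw [show H + (n + 1) = (H + n) + 1 by omega, Nat.count_succ, Nat.count_succ, ihQ]
        simp only [hiff2]
        by_cases hp : Pp n <;> simp [hp] <;> omega

end S17


namespace S17

open scoped Classical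

lemma Pp_not_Qp (N : ℕ) (h : 0 < N) : Pp N ↔ ¬ Qp N := by
  unfold Pp Qp
  constructor
  · rintro ⟨_, h2⟩ ⟨_, h3⟩; linarith
  · intro hq
    refine ⟨h, ?_⟩
    by_contra hc
    exact hq ⟨h, by linarith⟩

lemma count_sum : ∀ N : ℕ, 1 ≤ N → Nat.count Pp N + Nat.count Qp N + 1 = N := by
  intro N
  induction N with
  | zero => omega
  | succ n ih =>
    intro _
    rcases Nat.eq_zero_or_pos n with hn | hn
    · subst hn
      rw [Nat.count_succ, Nat.count_succ]
      simp [show ¬ Pp 0 from fun h => by simp [Pp] at h,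
            show ¬ Qp 0 from fun h => by simp [Qp] at h]
    · have := ih hn
      rw [Nat.count_succ, Nat.count_succ]
      have hd := Pp_not_Qp n hn
      by_cases hp : Pp n
      · simp [hp, hd.mp hp]; omega
      · have hq : Qp n := by
          by_contra hq
          exact hp (hd.mpr hq)
        simp [hp, hq]; omega

lemma Pp_pell_odd (t : ℕ) : Pp (pell (2 * t + 1)) := by
  refine ⟨pell_pos _ (by omega), ?_⟩
  show Int.fract ((pell (2 * t + 1) : ℝ) * s) < 1 / 2
  rw [fract_pell_odd t]
  have h1 : (s - 1) ^ (2 * t + 1) ≤ s - 1 :=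
    pow_le_of_le_one beta_pos.le (by linarith [beta_lt_half]) (by omega)
  linarith [beta_lt_half]

lemma Qp_pell_even (t : ℕ) : Qp (pell (2 * (t + 1))) := by
  refine ⟨pell_pos _ (by omega), ?_⟩
  show 1 / 2 ≤ Int.fract ((pell (2 * (t + 1)) : ℝ) * s)
  rw [fract_pell_even (t + 1) (by omega)]
  have h1 : (s - 1) ^ (2 * (t + 1)) ≤ s - 1 :=
    pow_le_of_le_one beta_pos.le (by linarith [beta_lt_half]) (by omega)
  linarith [beta_lt_half]

lemma Pp_infinite : {k | Pp k}.Infinite := by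
  apply Set.infinite_of_injective_forall_mem
    (f := fun t : ℕ => pell (2 * t + 1))
  · intro t1 t2 h
    have := pell_strictMono.injective h
    omega
  · intro t
    exact Pp_pell_odd t

lemma Qp_infinite : {k | Qp k}.Infinite := by
  apply Set.infinite_of_injective_forall_mem
    (f := fun t : ℕ => pell (2 * (t + 1)))
  · intro t1 t2 h
    have := pell_strictMono.injective h
    omega
  · intro t
    exact Qp_pell_even t

lemma pell_half (m : ℕ) : 2 * (pell (2 * m) / 2) = pell (2 * m) :=
  Nat.mul_div_cancel' (pell_even m)

/-- Main induction: the two counting formulas. -/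
lemma main : ∀ m : ℕ,
    (2 * Nat.count Pp (pell (2 * m + 1)) + 1 = pell (2 * m + 1)) ∧
    (1 ≤ m → 4 * Nat.count Pp (pell (2 * m) / 2) + 4 = pell (2 * m) + 2 * m) := by
  intro m
  induction m with
  | zero =>
    constructor
    · have h1 : pell 1 = 1 := rfl
      rw [show 2 * 0 + 1 = 1 from rfl, h1]
      simp [Nat.count_succ, show ¬ Pp 0 from fun h => by simp [Pp] at h]
    · omega
  | succ m ih =>
    obtain ⟨ihA, ihB⟩ := ih
    have hp2 : pell (2 * m + 2) = 2 * pell (2 * m + 1) + pell (2 * m) := rfl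
    have hidx : 2 * (m + 1) = 2 * m + 2 := by ring
    -- part B at m+1
    have hB : 4 * Nat.count Pp (pell (2 * (m + 1)) / 2) + 4 = pell (2 * (m + 1)) + 2 * (m + 1) := by
      rcases Nat.eq_zero_or_pos m with hm0 | hm1
      · subst hm0
        have h2 : pell 2 = 2 := rfl
        norm_num [h2]
        simp [Nat.count_succ, show ¬ Pp 0 from fun h => by simp [Pp] at h]
      · set H : ℕ := pell (2 * m) / 2 with hHdef
        have hH : 2 * H = pell (2 * m) := pell_half m
        set P' : ℕ := pell (2 * m + 1) with hP'def
        have hP'pos : 1 ≤ P' := pell_pos _ (by omega)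
        have hflip := count_flip m hm1 H hH P' hP'pos (le_refl _)
        have hsum := count_sum P' hP'pos
        have hH' : 2 * (pell (2 * (m + 1)) / 2) = pell (2 * (m + 1)) := pell_half (m + 1)
        have harg : pell (2 * (m + 1)) / 2 = H + P' := by
          rw [hidx] at hH' ⊢
          omega
        rw [harg]
        rw [hidx, hp2]
        have hBm := ihB hm1
        omega
    refine ⟨?_, fun _ => hB⟩
    -- part A at m+1
    set H' : ℕ := pell (2 * (m + 1)) / 2 with hH'def
    have hH' : 2 * H' = pell (2 * (m + 1)) := pell_half (m + 1)
    have hH'pos : 1 ≤ H' := H_pos (m + 1) (by omega) H' hH'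
    set P' : ℕ := pell (2 * m + 1) with hP'def
    have hP'pos : 1 ≤ P' := pell_pos _ (by omega)
    have hp3 : pell (2 * (m + 1) + 1) = 4 * H' + P' := by
      have e : pell (2 * m + 3) = 2 * pell (2 * m + 2) + pell (2 * m + 1) := rfl
      have e2 : 2 * (m + 1) + 1 = 2 * m + 3 := by ring
      rw [e2, e, ← hP'def]
      rw [hidx] at hH'
      omega
    have hc1 : 3 * H' + P' ≤ pell (2 * (m + 1) + 1) := by omega
    have hc2 : 2 * H' + P' ≤ pell (2 * (m + 1) + 1) := by omega
    have hc3 : H' + P' ≤ pell (2 * (m + 1) + 1) := by omega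
    have hc4 : P' ≤ pell (2 * (m + 1) + 1) := by omega
    have fa := (count_flip (m + 1) (by omega) H' hH' (3 * H' + P') (by omega) hc1).1
    have fb := (count_flip (m + 1) (by omega) H' hH' (2 * H' + P') (by omega) hc2).2
    have fc := (count_flip (m + 1) (by omega) H' hH' (H' + P') (by omega) hc3).1
    have fd := (count_flip (m + 1) (by omega) H' hH' P' hP'pos hc4).2
    rw [show H' + (3 * H' + P') = 4 * H' + P' by ring] at fa
    rw [show H' + (2 * H' + P') = 3 * H' + P' by ring] at fb
    rw [show H' + (H' + P') = 2 * H' + P' by ring] at fc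
    have hsumH := count_sum H' hH'pos
    have hBm := hB
    rw [hp3]
    omega

end S17


theorem stmt_17 (m : ℕ) (hm : 1 < m) :
    4 ∣ pell (2 * m) + 2 * m ∧
    (b ((pell (2 * m) + 2 * m) / 4) : ℤ) - (a ((pell (2 * m) + 2 * m) / 4) : ℤ) = a m := by
  classical
  obtain ⟨hA, hBf⟩ := S17.main m
  have hB := hBf (by omega)
  set H : ℕ := pell (2 * m) / 2 with hHdef
  have hH : 2 * H = pell (2 * m) := S17.pell_half m
  have hdvd : 4 ∣ pell (2 * m) + 2 * m := ⟨Nat.count S17.Pp H + 1, by omega⟩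
  refine ⟨hdvd, ?_⟩
  set n : ℕ := (pell (2 * m) + 2 * m) / 4 with hndef
  have hn : n = Nat.count S17.Pp H + 1 := by omega
  have haPp : S17.Pp H := S17.Pp_H m (by omega) H hH
  have ha_n : a n = H := by
    show Nat.nth S17.Pp (n - 1) = H
    have h1 : n - 1 = Nat.count S17.Pp H := by omega
    rw [h1]
    exact Nat.nth_count haPp
  have ham : a m = Nat.nth S17.Pp (m - 1) := rfl
  have hPam : S17.Pp (a m) := by
    rw [ham]; exact Nat.nth_mem_of_infinite S17.Pp_infinite _
  have hcam : Nat.count S17.Pp (a m) = m - 1 := by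
    rw [ham]; exact Nat.count_nth_of_infinite S17.Pp_infinite _
  have hampos : 0 < a m := hPam.1
  have hpge : 2 * m + 1 ≤ pell (2 * m + 1) := S17.pell_ge_self _
  have hamlt : a m < pell (2 * m + 1) := by
    rw [ham]
    apply Nat.nth_lt_of_lt_count
    omega
  have hflip := S17.count_flip m (by omega) H hH (a m) hampos (le_of_lt hamlt)
  have hqmem : S17.Qp (H + a m) := by
    have h2 := (S17.flip m (by omega) H hH (a m) hampos hamlt).1 hPam.2
    exact ⟨by omega, h2⟩
  have hHpos : 1 ≤ H := S17.H_pos m (by omega) H hH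
  have hsumH := S17.count_sum H hHpos
  have hcq : Nat.count S17.Qp (H + a m) = n - 1 := by
    have h3 := hflip.2
    omega
  have hb_n : b n = H + a m := by
    show Nat.nth S17.Qp (n - 1) = H + a m
    rw [← hcq]
    exact Nat.nth_count hqmem
  rw [ha_n, hb_n]
  push_cast
  ring
end

section
/- Let m be a positive even integer and let ξ_m = (√(m²+4) − m)/2 be the fractional part of the noble mean with constant continued fraction expansion [0; m, m, m, ...]. Then S_n(2·ξ_m) ≥ 0 for every integer n ≥ 0. -/
/-- The deterministic random walk `S_n(ξ) = ∑_{j=1}^n (-1)^⌊j·ξ⌋`. -/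
noncomputable def S (ξ : ℝ) (n : ℕ) : ℤ :=
  ∑ j ∈ Finset.Icc 1 n, ((Int.negOnePow ⌊(j : ℝ) * ξ⌋ : ℤˣ) : ℤ)

lemma S_split (ξ : ℝ) {k n : ℕ} (h : k ≤ n) :
    S ξ n = S ξ k + ∑ j ∈ Finset.Ioc k n, ((Int.negOnePow ⌊(j : ℝ) * ξ⌋ : ℤˣ) : ℤ) := by
  unfold S
  rw [show Finset.Icc 1 n = Finset.Ioc 0 n from (Finset.Icc_add_one_left_eq_Ioc 0 n),
      show Finset.Icc 1 k = Finset.Ioc 0 k from (Finset.Icc_add_one_left_eq_Ioc 0 k),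
      ← Finset.sum_Ioc_consecutive _ (Nat.zero_le k) h]

lemma S_plus (ξ : ℝ) {k n : ℕ} (h : k ≤ n)
    (hall : ∀ j ∈ Finset.Ioc k n, Even ⌊(j : ℝ) * ξ⌋) :
    S ξ n = S ξ k + (n - k : ℕ) := by
  rw [S_split ξ h]
  have hcongr : ∀ j ∈ Finset.Ioc k n, ((Int.negOnePow ⌊(j : ℝ) * ξ⌋ : ℤˣ) : ℤ) = 1 := by
    intro j hj; rw [Int.negOnePow_even _ (hall j hj)]; rfl
  rw [Finset.sum_congr rfl hcongr, Finset.sum_const, Nat.card_Ioc]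
  simp

lemma S_minus (ξ : ℝ) {k n : ℕ} (h : k ≤ n)
    (hall : ∀ j ∈ Finset.Ioc k n, Odd ⌊(j : ℝ) * ξ⌋) :
    S ξ n = S ξ k - (n - k : ℕ) := by
  rw [S_split ξ h]
  have hcongr : ∀ j ∈ Finset.Ioc k n, ((Int.negOnePow ⌊(j : ℝ) * ξ⌋ : ℤˣ) : ℤ) = -1 := by
    intro j hj; rw [Int.negOnePow_odd _ (hall j hj)]; rfl
  rw [Finset.sum_congr rfl hcongr, Finset.sum_const, Nat.card_Ioc]
  simp [sub_eq_add_neg]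

section Aux

variable {c : ℝ} {a : ℕ}

lemma toNat_cast_real {z : ℤ} (h : 0 ≤ z) : ((z.toNat : ℕ) : ℝ) = (z : ℝ) := by
  exact_mod_cast Int.toNat_of_nonneg h

lemma not_int_mul (hcI : Irrational c) {q : ℕ} (hq : 0 < q) (k : ℤ) : (q : ℝ) * c ≠ k :=
  (hcI.natCast_mul hq.ne').ne_int k

lemma floor_mul_lt (hcI : Irrational c) {q : ℕ} (hq : 0 < q) :
    (⌊(q : ℝ) * c⌋ : ℝ) < (q : ℝ) * c :=
  lt_of_le_of_ne (Int.floor_le _) (fun h => not_int_mul hcI hq ⌊(q : ℝ) * c⌋ h.symm)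

/-- If `k(a+c) < j < (k+1)(a+c)` then `⌊j·4c⌋ = k`, using `4c(a+c)=1`. -/
lemma run_floor (hc0 : 0 < c) (hid : 4 * c * ((a : ℝ) + c) = 1) (j : ℕ) (k : ℤ)
    (hlo : (k : ℝ) * ((a : ℝ) + c) < j) (hhi : (j : ℝ) < ((k : ℝ) + 1) * ((a : ℝ) + c)) :
    ⌊(j : ℝ) * (4 * c)⌋ = k := by
  have h4c : (0 : ℝ) < 4 * c := by linarith
  have h1 := mul_lt_mul_of_pos_right hlo h4c
  have h2 := mul_lt_mul_of_pos_right hhi h4c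
  have e1 : (k : ℝ) * ((a : ℝ) + c) * (4 * c) = k := by
    rw [mul_assoc, mul_comm ((a : ℝ) + c) (4 * c), hid, mul_one]
  have e2 : ((k : ℝ) + 1) * ((a : ℝ) + c) * (4 * c) = (k : ℝ) + 1 := by
    rw [mul_assoc, mul_comm ((a : ℝ) + c) (4 * c), hid, mul_one]
  exact Int.floor_eq_iff.mpr ⟨by push_cast; linarith, by push_cast; linarith⟩

/-- If `Kc < p < (K+1)c` then `⌊p·4c⌋ = K - 4pa`, using `4c(a+c)=1`. -/
lemma run_floor2 (hc0 : 0 < c) (hid : 4 * c * ((a : ℝ) + c) = 1) (p : ℕ) (K : ℤ)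
    (hlo : (K : ℝ) * c < p) (hhi : (p : ℝ) < ((K : ℝ) + 1) * c) :
    ⌊(p : ℝ) * (4 * c)⌋ = K - 4 * p * a := by
  have haR : (0 : ℝ) ≤ (a : ℝ) := Nat.cast_nonneg a
  have hac : (0 : ℝ) < 4 * (a : ℝ) + 4 * c := by linarith
  have h1 := mul_lt_mul_of_pos_right hlo hac
  have h2 := mul_lt_mul_of_pos_right hhi hac
  have e1 : (K : ℝ) * c * (4 * (a : ℝ) + 4 * c) = K := by
    rw [mul_assoc, show c * (4 * (a : ℝ) + 4 * c) = 4 * c * ((a : ℝ) + c) from by ring,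
      hid, mul_one]
  have e2 : ((K : ℝ) + 1) * c * (4 * (a : ℝ) + 4 * c) = (K : ℝ) + 1 := by
    rw [mul_assoc, show c * (4 * (a : ℝ) + 4 * c) = 4 * c * ((a : ℝ) + c) from by ring,
      hid, mul_one]
  have e3 : (p : ℝ) * (4 * (a : ℝ) + 4 * c) = 4 * (p : ℝ) * (a : ℝ) + (p : ℝ) * (4 * c) := by
    ring
  refine Int.floor_eq_iff.mpr ⟨?_, ?_⟩
  · push_cast
    linarith
  · push_cast
    linarith

/-- The key renormalization identity. -/
lemma key (ha : 1 ≤ a) (hc0 : 0 < c) (hcI : Irrational c)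
    (hid : 4 * c * ((a : ℝ) + c) = 1) :
    ∀ t : ℕ, S (4 * c) (2 * t * a + (⌊((2 * t : ℕ) : ℝ) * c⌋).toNat)
      = S (4 * c) (⌊((2 * t : ℕ) : ℝ) * c⌋).toNat := by
  have hc4 : c < 1 / 4 := by
    nlinarith [show (1:ℝ) ≤ (a:ℝ) from by exact_mod_cast ha]
  intro t
  induction t with
  | zero => simp
  | succ t IH =>
    obtain ⟨f0, hf0⟩ : ∃ z : ℤ, z = ⌊((2 * t : ℕ) : ℝ) * c⌋ := ⟨_, rfl⟩
    obtain ⟨f1, hf1⟩ : ∃ z : ℤ, z = ⌊((2 * t + 1 : ℕ) : ℝ) * c⌋ := ⟨_, rfl⟩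
    obtain ⟨f2, hf2⟩ : ∃ z : ℤ, z = ⌊((2 * (t + 1) : ℕ) : ℝ) * c⌋ := ⟨_, rfl⟩
    rw [← hf0] at IH
    rw [← hf2]
    have hf0n : 0 ≤ f0 := hf0 ▸ Int.floor_nonneg.mpr (by positivity)
    have hf1n : 0 ≤ f1 := hf1 ▸ Int.floor_nonneg.mpr (by positivity)
    have hf2n : 0 ≤ f2 := hf2 ▸ Int.floor_nonneg.mpr (by positivity)
    have hcast0 : ((2 * t : ℕ) : ℝ) = 2 * (t : ℝ) := by push_cast; ring
    have hcast1 : ((2 * t + 1 : ℕ) : ℝ) = 2 * (t : ℝ) + 1 := by push_cast; ring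
    have hcast2 : ((2 * (t + 1) : ℕ) : ℝ) = 2 * (t : ℝ) + 2 := by push_cast; ring
    have htR : (0 : ℝ) ≤ (t : ℝ) := Nat.cast_nonneg t
    -- basic floor bounds
    have hfle0 : (f0 : ℝ) ≤ (2 * (t : ℝ)) * c := by
      rw [hf0]; rw [← hcast0]; exact Int.floor_le _
    have hflo0 : (2 * (t : ℝ)) * c < (f0 : ℝ) + 1 := by
      rw [hf0, ← hcast0]; exact Int.lt_floor_add_one _
    have hflt1 : (f1 : ℝ) < (2 * (t : ℝ) + 1) * c := by
      rw [hf1, ← hcast1]; exact floor_mul_lt hcI (by omega)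
    have hflo1 : (2 * (t : ℝ) + 1) * c < (f1 : ℝ) + 1 := by
      rw [hf1, ← hcast1]; exact Int.lt_floor_add_one _
    have hflt2 : (f2 : ℝ) < (2 * (t : ℝ) + 2) * c := by
      rw [hf2, ← hcast2]; exact floor_mul_lt hcI (by omega)
    have h01 : f0 ≤ f1 := by
      rw [hf0, hf1]; exact Int.floor_le_floor (by rw [hcast0, hcast1]; nlinarith)
    have h12 : f1 ≤ f2 := by
      rw [hf1, hf2]; exact Int.floor_le_floor (by rw [hcast1, hcast2]; nlinarith)
    have h20 : f2 ≤ f0 + 1 := by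
      have : (f2 : ℝ) < (f0 : ℝ) + 2 := by nlinarith
      have := (by exact_mod_cast this : f2 < f0 + 2)
      omega
    obtain ⟨N0, hN0⟩ : ∃ x : ℕ, x = 2 * t * a + f0.toNat := ⟨_, rfl⟩
    obtain ⟨M, hM⟩ : ∃ x : ℕ, x = (2 * t + 1) * a + f1.toNat := ⟨_, rfl⟩
    obtain ⟨N1, hN1⟩ : ∃ x : ℕ, x = 2 * (t + 1) * a + f2.toNat := ⟨_, rfl⟩
    rw [← hN0] at IH
    rw [← hN1]
    have ea1 : (2 * t + 1) * a = 2 * t * a + a := by ring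
    have ea2 : 2 * (t + 1) * a = 2 * t * a + 2 * a := by ring
    have ht01 := Int.toNat_le_toNat h01
    have ht12 := Int.toNat_le_toNat h12
    have htn0 := Int.toNat_of_nonneg hf0n
    have htn1 := Int.toNat_of_nonneg hf1n
    have htn2 := Int.toNat_of_nonneg hf2n
    have hN0M : N0 ≤ M := by omega
    have hMN1 : M ≤ N1 := by omega
    have hN0r : (N0 : ℝ) = 2 * (t : ℝ) * a + (f0 : ℝ) := by
      rw [hN0]; push_cast [toNat_cast_real hf0n]; ring
    have hMr : (M : ℝ) = (2 * (t : ℝ) + 1) * a + (f1 : ℝ) := by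
      rw [hM]; push_cast [toNat_cast_real hf1n]; ring
    have hN1r : (N1 : ℝ) = (2 * (t : ℝ) + 2) * a + (f2 : ℝ) := by
      rw [hN1]; push_cast [toNat_cast_real hf2n]; ring
    -- floors on (N0, M] equal 2t, on (M, N1] equal 2t+1
    have hrun1 : ∀ j ∈ Finset.Ioc N0 M, ⌊(j : ℝ) * (4 * c)⌋ = 2 * (t : ℤ) := by
      intro j hj
      rw [Finset.mem_Ioc] at hj
      have hjlo : (N0 : ℝ) + 1 ≤ (j : ℝ) := by exact_mod_cast hj.1
      have hjhi : (j : ℝ) ≤ (M : ℝ) := by exact_mod_cast hj.2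
      refine run_floor hc0 hid j (2 * t) ?_ ?_
      · push_cast
        rw [hN0r] at hjlo
        linarith
      · push_cast
        rw [hMr] at hjhi
        linarith
    have hrun2 : ∀ j ∈ Finset.Ioc M N1, ⌊(j : ℝ) * (4 * c)⌋ = 2 * (t : ℤ) + 1 := by
      intro j hj
      rw [Finset.mem_Ioc] at hj
      have hjlo : (M : ℝ) + 1 ≤ (j : ℝ) := by exact_mod_cast hj.1
      have hjhi : (j : ℝ) ≤ (N1 : ℝ) := by exact_mod_cast hj.2
      refine run_floor hc0 hid j (2 * t + 1) ?_ ?_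
      · push_cast
        rw [hMr] at hjlo
        linarith
      · push_cast
        rw [hN1r] at hjhi
        linarith
    have hSM : S (4 * c) M = S (4 * c) N0 + (M - N0 : ℕ) :=
      S_plus _ hN0M (fun j hj => by rw [hrun1 j hj]; exact ⟨(t : ℤ), by ring⟩)
    have hSN1 : S (4 * c) N1 = S (4 * c) M - (N1 - M : ℕ) :=
      S_minus _ hMN1 (fun j hj => by rw [hrun2 j hj]; exact ⟨(t : ℤ), by ring⟩)
    have hdMN0 : ((M - N0 : ℕ) : ℤ) = a + f1 - f0 := by omega
    have hdN1M : ((N1 - M : ℕ) : ℤ) = a + f2 - f1 := by omega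
    -- case split on whether a new point appears
    rcases (by omega : f2 = f0 ∨ f2 = f0 + 1) with h2eq | h2eq
    · -- no new point
      have : f2.toNat = f0.toNat := by omega
      rw [this, hSN1, hSM, IH]
      have hf10 : f1 = f0 := by omega
      omega
    · -- one new point p = f0 + 1
      have hp : f2.toNat = f0.toNat + 1 := by omega
      have hppos : 0 < f2.toNat := by omega
      have hpr : ((f2.toNat : ℕ) : ℝ) = (f2 : ℝ) := toNat_cast_real hf2n
      have hsplitP : S (4 * c) f2.toNat
          = S (4 * c) f0.toNat + ((Int.negOnePow ⌊((f2.toNat : ℕ) : ℝ) * (4 * c)⌋ : ℤˣ) : ℤ) := by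
        rw [S_split (4 * c) (show f0.toNat ≤ f2.toNat by omega)]
        congr 1
        rw [show Finset.Ioc f0.toNat f2.toNat = {f2.toNat} from by
          ext x; simp only [Finset.mem_Ioc, Finset.mem_singleton]; omega]
        rw [Finset.sum_singleton]
      rcases (by omega : f1 = f0 ∨ f1 = f0 + 1) with h1eq | h1eq
      · -- new point has odd floor: contributes -1, and the runs have lengths a, a+1
        have hterm : ⌊((f2.toNat : ℕ) : ℝ) * (4 * c)⌋ = (2 * t + 1) - 4 * f2.toNat * a := by
          refine run_floor2 hc0 hid f2.toNat (2 * t + 1) ?_ ?_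
          · push_cast
            rw [hpr]
            have hf2v : (f2 : ℝ) = (f0 : ℝ) + 1 := by exact_mod_cast h2eq
            have hf1v : (f1 : ℝ) = (f0 : ℝ) := by exact_mod_cast h1eq
            linarith
          · push_cast
            rw [hpr]
            linarith
        have hsign : ((Int.negOnePow ⌊((f2.toNat : ℕ) : ℝ) * (4 * c)⌋ : ℤˣ) : ℤ) = -1 := by
          rw [hterm, Int.negOnePow_odd _ ⟨(t : ℤ) - 2 * f2.toNat * a, by ring⟩]; rfl
        rw [hSN1, hSM, IH, hsplitP, hsign]
        omega
      · -- new point has even floor: contributes +1, and the runs have lengths a+1, a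
        have hterm : ⌊((f2.toNat : ℕ) : ℝ) * (4 * c)⌋ = 2 * t - 4 * f2.toNat * a := by
          refine run_floor2 hc0 hid f2.toNat (2 * t) ?_ ?_
          · push_cast
            rw [hpr]
            have hf2v : (f2 : ℝ) = (f0 : ℝ) + 1 := by exact_mod_cast h2eq
            linarith
          · push_cast
            rw [hpr]
            have hf2v : (f2 : ℝ) = (f1 : ℝ) := by
              have : f2 = f1 := by omega
              exact_mod_cast this
            linarith
        have hsign : ((Int.negOnePow ⌊((f2.toNat : ℕ) : ℝ) * (4 * c)⌋ : ℤˣ) : ℤ) = 1 := by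
          rw [hterm, Int.negOnePow_even _ ⟨(t : ℤ) - 2 * f2.toNat * a, by ring⟩]; rfl
        rw [hSN1, hSM, IH, hsplitP, hsign]
        omega

/-- Descent: every `S n` dominates some even-run boundary value. -/
lemma descent (ha : 1 ≤ a) (hc0 : 0 < c) (hcI : Irrational c)
    (hid : 4 * c * ((a : ℝ) + c) = 1) (n : ℕ) (hn : 1 ≤ n) :
    ∃ t : ℕ, (2 * t : ℤ) ≤ ⌊(n : ℝ) * (4 * c)⌋ + 1 ∧
      S (4 * c) (2 * t * a + (⌊((2 * t : ℕ) : ℝ) * c⌋).toNat) ≤ S (4 * c) n := by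
  have haR : (1 : ℝ) ≤ (a : ℝ) := by exact_mod_cast ha
  have hacpos : (0 : ℝ) < (a : ℝ) + c := by linarith
  obtain ⟨K, hKdef⟩ : ∃ z : ℤ, z = ⌊(n : ℝ) * (4 * c)⌋ := ⟨_, rfl⟩
  have hK0 : 0 ≤ K := hKdef ▸ Int.floor_nonneg.mpr (by positivity)
  have hKle : (K : ℝ) ≤ (n : ℝ) * (4 * c) := hKdef ▸ Int.floor_le _
  have hKgt : (n : ℝ) * (4 * c) < (K : ℝ) + 1 := hKdef ▸ Int.lt_floor_add_one _
  rcases Int.even_or_odd K with ⟨k, hk⟩ | ⟨k, hk⟩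
  · -- K = 2k even : go down to the end of run K-1
    have hkn : 0 ≤ k := by omega
    refine ⟨k.toNat, by rw [← hKdef]; omega, ?_⟩
    obtain ⟨t, ht⟩ : ∃ t : ℕ, t = k.toNat := ⟨_, rfl⟩
    rw [← ht]
    have htk : (t : ℤ) = k := by rw [ht]; exact Int.toNat_of_nonneg hkn
    have htK : (K : ℝ) = 2 * (t : ℝ) := by
      have : K = 2 * (t : ℤ) := by omega
      exact_mod_cast this
    obtain ⟨f0, hf0⟩ : ∃ z : ℤ, z = ⌊((2 * t : ℕ) : ℝ) * c⌋ := ⟨_, rfl⟩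
    rw [← hf0]
    have hf0n : 0 ≤ f0 := hf0 ▸ Int.floor_nonneg.mpr (by positivity)
    have hcast0 : ((2 * t : ℕ) : ℝ) = 2 * (t : ℝ) := by push_cast; ring
    have hfle0 : (f0 : ℝ) ≤ (2 * (t : ℝ)) * c := by
      rw [hf0, ← hcast0]; exact Int.floor_le _
    have hflo0 : (2 * (t : ℝ)) * c < (f0 : ℝ) + 1 := by
      rw [hf0, ← hcast0]; exact Int.lt_floor_add_one _
    obtain ⟨N, hN⟩ : ∃ x : ℕ, x = 2 * t * a + f0.toNat := ⟨_, rfl⟩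
    rw [← hN]
    have htn0 := Int.toNat_of_nonneg hf0n
    have hNr : (N : ℝ) = 2 * (t : ℝ) * a + (f0 : ℝ) := by
      rw [hN]; push_cast [toNat_cast_real hf0n]; ring
    -- N ≤ n
    have h2tn : 2 * (t : ℝ) * ((a : ℝ) + c) ≤ (n : ℝ) := by
      have h3 : 2 * (t : ℝ) ≤ (n : ℝ) * (4 * c) := by rw [← htK]; exact hKle
      have := mul_le_mul_of_nonneg_right h3 hacpos.le
      calc 2 * (t : ℝ) * ((a : ℝ) + c) ≤ (n : ℝ) * (4 * c) * ((a : ℝ) + c) := this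
        _ = (n : ℝ) * (4 * c * ((a : ℝ) + c)) := by ring
        _ = (n : ℝ) := by rw [hid]; ring
    have hNn : N ≤ n := by
      have : (N : ℝ) ≤ (n : ℝ) := by
        rw [hNr]
        linarith
      exact_mod_cast this
    have hall : ∀ j ∈ Finset.Ioc N n, Even ⌊(j : ℝ) * (4 * c)⌋ := by
      intro j hj
      rw [Finset.mem_Ioc] at hj
      have hjlo : (N : ℝ) + 1 ≤ (j : ℝ) := by exact_mod_cast hj.1
      have hjhi : (j : ℝ) ≤ (n : ℝ) := by exact_mod_cast hj.2
      have hfl : ⌊(j : ℝ) * (4 * c)⌋ = 2 * (t : ℤ) := by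
        refine run_floor hc0 hid j (2 * t) ?_ ?_
        · push_cast
          rw [hNr] at hjlo
          linarith
        · -- j ≤ n < (K+1)(a+c) = (2t+1)(a+c)
          have h4 : (n : ℝ) < ((K : ℝ) + 1) * ((a : ℝ) + c) := by
            have := mul_lt_mul_of_pos_right hKgt hacpos
            calc (n : ℝ) = (n : ℝ) * (4 * c * ((a : ℝ) + c)) := by rw [hid]; ring
              _ = (n : ℝ) * (4 * c) * ((a : ℝ) + c) := by ring
              _ < _ := this
          push_cast
          rw [htK] at h4
          linarith
      rw [hfl]
      exact ⟨(t : ℤ), by ring⟩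
    rw [S_plus (4 * c) hNn hall]
    have : (0 : ℤ) ≤ ((n - N : ℕ) : ℤ) := Int.natCast_nonneg _
    omega
  · -- K = 2k + 1 odd : go up to the end of run K
    have hkn : 0 ≤ k := by omega
    refine ⟨(k + 1).toNat, by rw [← hKdef]; omega, ?_⟩
    obtain ⟨t, ht⟩ : ∃ t : ℕ, t = (k + 1).toNat := ⟨_, rfl⟩
    rw [← ht]
    have htk : (t : ℤ) = k + 1 := by rw [ht]; exact Int.toNat_of_nonneg (by omega)
    have htpos : 1 ≤ t := by omega
    have htK : (K : ℝ) + 1 = 2 * (t : ℝ) := by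
      have : K + 1 = 2 * (t : ℤ) := by omega
      exact_mod_cast this
    obtain ⟨f0, hf0⟩ : ∃ z : ℤ, z = ⌊((2 * t : ℕ) : ℝ) * c⌋ := ⟨_, rfl⟩
    rw [← hf0]
    have hf0n : 0 ≤ f0 := hf0 ▸ Int.floor_nonneg.mpr (by positivity)
    have hcast0 : ((2 * t : ℕ) : ℝ) = 2 * (t : ℝ) := by push_cast; ring
    have hflt0 : (f0 : ℝ) < (2 * (t : ℝ)) * c := by
      rw [hf0, ← hcast0]; exact floor_mul_lt hcI (by omega)
    have hflo0 : (2 * (t : ℝ)) * c < (f0 : ℝ) + 1 := by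
      rw [hf0, ← hcast0]; exact Int.lt_floor_add_one _
    obtain ⟨N, hN⟩ : ∃ x : ℕ, x = 2 * t * a + f0.toNat := ⟨_, rfl⟩
    rw [← hN]
    have htn0 := Int.toNat_of_nonneg hf0n
    have hNr : (N : ℝ) = 2 * (t : ℝ) * a + (f0 : ℝ) := by
      rw [hN]; push_cast [toNat_cast_real hf0n]; ring
    -- n ≤ N
    have hn2t : (n : ℝ) < 2 * (t : ℝ) * ((a : ℝ) + c) := by
      have h3 : (n : ℝ) * (4 * c) < 2 * (t : ℝ) := by rw [← htK]; exact hKgt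
      have := mul_lt_mul_of_pos_right h3 hacpos
      calc (n : ℝ) = (n : ℝ) * (4 * c) * ((a : ℝ) + c) := by
            rw [mul_assoc, hid]; ring
        _ < 2 * (t : ℝ) * ((a : ℝ) + c) := this
    have hnN : n ≤ N := by
      -- n < 2ta + 2tc, n integer, so n ≤ 2ta + ⌊2tc⌋ = N
      have h5 : (n : ℝ) < ((2 * t * a : ℕ) : ℝ) + (f0 : ℝ) + 1 := by
        push_cast
        linarith
      have h4 : (n : ℤ) < (2 * t * a : ℕ) + f0 + 1 := by exact_mod_cast h5
      omega
    have hall : ∀ j ∈ Finset.Ioc n N, Odd ⌊(j : ℝ) * (4 * c)⌋ := by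
      intro j hj
      rw [Finset.mem_Ioc] at hj
      have hjlo : (n : ℝ) ≤ (j : ℝ) := by exact_mod_cast le_of_lt hj.1
      have hjhi : (j : ℝ) ≤ (N : ℝ) := by exact_mod_cast hj.2
      have hlow : K ≤ ⌊(j : ℝ) * (4 * c)⌋ := by
        rw [hKdef]
        exact Int.floor_le_floor (by
          apply mul_le_mul_of_nonneg_right hjlo
          linarith)
      have hup : ⌊(j : ℝ) * (4 * c)⌋ < 2 * (t : ℤ) := by
        apply Int.floor_lt.mpr
        have hjN : (j : ℝ) < 2 * (t : ℝ) * ((a : ℝ) + c) := by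
          rw [hNr] at hjhi
          linarith
        have := mul_lt_mul_of_pos_right hjN (show (0 : ℝ) < 4 * c by linarith)
        push_cast
        calc (j : ℝ) * (4 * c) < 2 * (t : ℝ) * ((a : ℝ) + c) * (4 * c) := this
          _ = 2 * (t : ℝ) * (4 * c * ((a : ℝ) + c)) := by ring
          _ = 2 * (t : ℝ) := by rw [hid]; ring
      have hfl : ⌊(j : ℝ) * (4 * c)⌋ = K := by omega
      rw [hfl, hk]
      exact ⟨k, rfl⟩
    rw [S_minus (4 * c) hnN hall]
    have : (0 : ℤ) ≤ ((N - n : ℕ) : ℤ) := Int.natCast_nonneg _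
    omega

lemma main_aux (ha : 1 ≤ a) (hc0 : 0 < c) (hcI : Irrational c)
    (hid : 4 * c * ((a : ℝ) + c) = 1) : ∀ n : ℕ, 0 ≤ S (4 * c) n := by
  have hc4 : c < 1 / 4 := by
    nlinarith [show (1:ℝ) ≤ (a:ℝ) from by exact_mod_cast ha]
  intro n
  induction n using Nat.strong_induction_on with
  | _ n IH =>
    rcases Nat.eq_zero_or_pos n with rfl | hn
    · simp [S]
    obtain ⟨t, ht, hSt⟩ := descent ha hc0 hcI hid n hn
    rw [key ha hc0 hcI hid t] at hSt
    obtain ⟨P, hP⟩ : ∃ P : ℕ, P = (⌊((2 * t : ℕ) : ℝ) * c⌋).toNat := ⟨_, rfl⟩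
    rw [← hP] at hSt
    have hf0n : (0 : ℤ) ≤ ⌊((2 * t : ℕ) : ℝ) * c⌋ := Int.floor_nonneg.mpr (by positivity)
    have hPn : P < n := by
      have h1 : (P : ℝ) ≤ ((2 * t : ℕ) : ℝ) * c := by
        rw [hP, toNat_cast_real hf0n]
        exact Int.floor_le _
      have h2 : ((2 * t : ℕ) : ℝ) ≤ (n : ℝ) * (4 * c) + 1 := by
        have h3 := Int.floor_le ((n : ℝ) * (4 * c))
        have ht' : ((2 * t : ℤ) : ℝ) ≤ (⌊(n : ℝ) * (4 * c)⌋ : ℝ) + 1 := by exact_mod_cast ht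
        push_cast at ht' ⊢
        linarith
      have hn1 : (1 : ℝ) ≤ (n : ℝ) := by exact_mod_cast hn
      have h1' : (P : ℝ) ≤ 2 * (t : ℝ) * c := by push_cast at h1; linarith
      have h2' : 2 * (t : ℝ) ≤ (n : ℝ) * (4 * c) + 1 := by push_cast at h2; linarith
      have q1 : 2 * (t : ℝ) * c ≤ ((n : ℝ) * (4 * c) + 1) * c :=
        mul_le_mul_of_nonneg_right h2' hc0.le
      have r1 : ((n : ℝ) * (4 * c) + 1) * c < ((n : ℝ) * (4 * c) + 1) * (1 / 4) :=
        mul_lt_mul_of_pos_left hc4 (by positivity)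
      have r3 : (n : ℝ) * c < (n : ℝ) * (1 / 4) :=
        mul_lt_mul_of_pos_left hc4 (by linarith)
      have h3 : (P : ℝ) < (n : ℝ) := by nlinarith [h1', q1, r1, r3]
      exact_mod_cast h3
    exact le_trans (IH P hPn) hSt

end Aux

/-- For a positive even integer `m`, the walk `S_n(2·ξ_m)` for the adjusted noble mean
`ξ_m = (√(m²+4) − m)/2` is nonnegative. -/
theorem stmt_19 (m : ℕ) (hm : 0 < m) (hme : Even m) (n : ℕ) :
    0 ≤ S (2 * ((Real.sqrt ((m : ℝ) ^ 2 + 4) - (m : ℝ)) / 2)) n := by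
  obtain ⟨a, hma⟩ := hme
  have ha : 1 ≤ a := by omega
  set s : ℝ := Real.sqrt ((m : ℝ) ^ 2 + 4) with hs
  have hs0 : 0 ≤ s := Real.sqrt_nonneg _
  have hs2 : s ^ 2 = (m : ℝ) ^ 2 + 4 := Real.sq_sqrt (by positivity)
  have hm2 : (m : ℝ) = (a : ℝ) + (a : ℝ) := by rw [hma]; push_cast; ring
  have hmR : (2 : ℝ) ≤ (m : ℝ) := by
    have : 2 ≤ m := by omega
    exact_mod_cast this
  have hsm : (m : ℝ) < s := by nlinarith
  have hsm1 : s < (m : ℝ) + 1 := by nlinarith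
  have hdom : 2 * ((s - (m : ℝ)) / 2) = 4 * ((s - (m : ℝ)) / 4) := by ring
  rw [hdom]
  have hc0 : 0 < (s - (m : ℝ)) / 4 := by linarith
  have hid : 4 * ((s - (m : ℝ)) / 4) * ((a : ℝ) + (s - (m : ℝ)) / 4) = 1 := by
    have haR : (a : ℝ) = (m : ℝ) / 2 := by rw [hm2]; ring
    rw [haR]
    linear_combination hs2 / 4
  have hsirr : Irrational s := by
    apply irrational_nrt_of_notint_nrt 2 ((m : ℤ) ^ 2 + 4)
    · rw [hs2]; push_cast; ring
    · rintro ⟨y, hy⟩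
      have h1 : ((m : ℤ) : ℝ) < (y : ℝ) := by rw [← hy]; exact_mod_cast hsm
      have h2 : (y : ℝ) < ((m : ℤ) : ℝ) + 1 := by
        rw [← hy]
        push_cast
        exact hsm1
      have h1' : (m : ℤ) < y := by exact_mod_cast h1
      have h2' : y < (m : ℤ) + 1 := by exact_mod_cast h2
      omega
    · norm_num
  have hcI : Irrational ((s - (m : ℝ)) / 4) := by
    exact (hsirr.sub_natCast m).div_natCast (by norm_num)
  exact main_aux ha hc0 hcI hid n
end
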